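/- arXiv:1410.0417 — 7 statements merged into one kernel-verified Lean document; each statement's English description precedes it below -/
import Mathlib

section
/- For every M = [[α,γ],[β,δ]] ∈ SL₂(O_K) there exist integers m and n such that i(βδ̄−β̄δ) = m·√(−Δ) and i(αγ̄−ᾱγ) = n·√(−Δ); that is, the curvature and co-curvature of every K-Bianchi circle are integer multiples of √(−Δ). -/
open Complex ComplexConjugate NumberField

open Complex ComplexConjugate NumberField Module

lemma bianchi_key (K : Type) [Field K] [NumberField K]
    (hdeg : Module.finrank ℚ K = 2) (hdisc : NumberField.discr K < 0)
    (ι : K →+* ℂ) (x y : RingOfIntegers K) :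
    ∃ m : ℤ,
      Complex.I * (ι (algebraMap (RingOfIntegers K) K x) * conj (ι (algebraMap (RingOfIntegers K) K y))
        - conj (ι (algebraMap (RingOfIntegers K) K x)) * ι (algebraMap (RingOfIntegers K) K y))
        = (m : ℂ) * (Real.sqrt (-(NumberField.discr K : ℝ)) : ℂ) := by
  have hdiscR : (NumberField.discr K : ℝ) < 0 := by exact_mod_cast hdisc
  have hcardI : Fintype.card (Module.Free.ChooseBasisIndex ℤ (RingOfIntegers K)) = 2 := by
    rw [← Module.finrank_eq_card_chooseBasisIndex, RingOfIntegers.rank, hdeg]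
  let eIdx : Module.Free.ChooseBasisIndex ℤ (RingOfIntegers K) ≃ Fin 2 :=
    Fintype.equivFinOfCardEq hcardI
  let bQ : Basis (Fin 2) ℚ K := (NumberField.integralBasis K).reindex eIdx
  let bZ : Basis (Fin 2) ℤ (RingOfIntegers K) := (NumberField.RingOfIntegers.basis K).reindex eIdx
  have hbZQ : ∀ i, ((bZ i : RingOfIntegers K) : K) = bQ i := by
    intro i
    simp [bZ, bQ, Basis.reindex_apply, NumberField.integralBasis_apply]
  have hcardA : Fintype.card (K →ₐ[ℚ] ℂ) = 2 := by rw [AlgHom.card, hdeg]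
  let ιa : K →ₐ[ℚ] ℂ := RingHom.equivRatAlgHom _ _ ι
  have hιa : ∀ z, ιa z = ι z := fun z => rfl
  let e0 : Fin 2 ≃ (K →ₐ[ℚ] ℂ) := (Fintype.equivFinOfCardEq hcardA).symm
  let e : Fin 2 ≃ (K →ₐ[ℚ] ℂ) := (Equiv.swap (0 : Fin 2) (e0.symm ιa)).trans e0
  have he0 : e 0 = ιa := by simp [e]
  -- discriminant equals square of determinant
  have hD2 : ((NumberField.discr K : ℤ) : ℂ)
      = (e 0 (bQ 0) * e 1 (bQ 1) - e 1 (bQ 0) * e 0 (bQ 1)) ^ 2 := by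
    have h := Algebra.discr_eq_det_embeddingsMatrixReindex_pow_two ℚ ℂ (⇑bQ) e
    have hdet : (Algebra.embeddingsMatrixReindex ℚ ℂ (⇑bQ) e).det
        = e 0 (bQ 0) * e 1 (bQ 1) - e 1 (bQ 0) * e 0 (bQ 1) := by
      rw [Matrix.det_fin_two]
      simp [Algebra.embeddingsMatrixReindex, Algebra.embeddingsMatrix]
    have hdisc' : Algebra.discr ℚ (⇑bQ) = (NumberField.discr K : ℚ) := by
      rw [show (⇑bQ) = (⇑(NumberField.integralBasis K)) ∘ ⇑eIdx.symm from Basis.coe_reindex _ _,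
        Algebra.discr_reindex, NumberField.coe_discr]
    rw [hdisc', hdet] at h
    rw [← h]
    norm_num
  set D : ℂ := e 0 (bQ 0) * e 1 (bQ 1) - e 1 (bQ 0) * e 0 (bQ 1) with hDdef
  -- conj ∘ ι = e 1
  have hconj : ∀ z, conj (ι z) = e 1 z := by
    intro z
    let τa : K →ₐ[ℚ] ℂ := RingHom.equivRatAlgHom _ _ ((starRingEnd ℂ).comp ι)
    have hτ : ∀ w, τa w = conj (ι w) := fun w => rfl
    have : τa = e 0 ∨ τa = e 1 := by
      have : e.symm τa = 0 ∨ e.symm τa = 1 := by omega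
      rcases this with h | h
      · left; rw [← h, Equiv.apply_symm_apply]
      · right; rw [← h, Equiv.apply_symm_apply]
    rcases this with h | h
    · -- ι real-valued: derive contradiction with discr < 0
      exfalso
      have hreal : ∀ w, conj (ι w) = ι w := by
        intro w; rw [← hτ, h, he0, hιa]
      let σc : K →ₐ[ℚ] ℂ := RingHom.equivRatAlgHom _ _ ((starRingEnd ℂ).comp (e 1 : K →+* ℂ))
      have hσc : ∀ w, σc w = conj (e 1 w) := fun w => rfl
      have hσ : σc = e 0 ∨ σc = e 1 := by
        have : e.symm σc = 0 ∨ e.symm σc = 1 := by omega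
        rcases this with h' | h'
        · left; rw [← h', Equiv.apply_symm_apply]
        · right; rw [← h', Equiv.apply_symm_apply]
      have hσfix : ∀ w, conj (e 1 w) = e 1 w := by
        rcases hσ with h' | h'
        · exfalso
          have he10 : e 1 = e 0 := by
            ext w
            have h1 : conj ((e 1) w) = ι w := by rw [← hσc, h', he0, hιa]
            have h2 : (e 1) w = conj (ι w) := by rw [← h1, Complex.conj_conj]
            rw [h2, hreal, he0, hιa]
          have := e.injective he10
          simp at this
        · intro w; rw [← hσc w, h']
      have hDreal : conj D = D := by
        simp only [hDdef, map_sub, map_mul, he0, hιa, hreal, hσfix]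
      have hDre : D = ((D.re : ℝ) : ℂ) := by
        exact (Complex.conj_eq_iff_re.mp hDreal).symm
      have hsq : (NumberField.discr K : ℝ) = D.re ^ 2 := by
        have h3 := hD2
        rw [hDre] at h3
        exact_mod_cast h3
      nlinarith [sq_nonneg D.re]
    · rw [← hτ, h]
  -- conj ∘ (e 1) = ι
  have hconj' : ∀ z, conj (e 1 z) = ι z := by
    intro z; rw [← hconj, Complex.conj_conj]
  -- D is purely imaginary
  have hDconj : conj D = -D := by
    simp only [hDdef, map_sub, map_mul, he0, hιa, hconj, hconj']
    ring
  have hre : D.re = 0 := by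
    have := congrArg Complex.re hDconj
    simp at this
    linarith
  set t : ℝ := D.im with htdef
  have hDt : D = (t : ℂ) * Complex.I := by
    apply Complex.ext <;> simp [hre] <;> rfl
  have ht2 : t ^ 2 = -(NumberField.discr K : ℝ) := by
    have h3 := hD2
    rw [hDt] at h3
    have : ((NumberField.discr K : ℝ) : ℂ) = ((-(t ^ 2) : ℝ) : ℂ) := by
      push_cast
      rw [h3]
      ring_nf
      simp [Complex.I_sq]
    have := Complex.ofReal_inj.mp this
    linarith
  have habs : |t| = Real.sqrt (-(NumberField.discr K : ℝ)) := by
    rw [← ht2, Real.sqrt_sq_eq_abs]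
  -- coordinates
  set a0 : ℤ := bZ.repr x 0; set a1 : ℤ := bZ.repr x 1
  set c0 : ℤ := bZ.repr y 0; set c1 : ℤ := bZ.repr y 1
  have hxsum : x = a0 • bZ 0 + a1 • bZ 1 := by
    conv_lhs => rw [← bZ.sum_repr x]
    rw [Fin.sum_univ_two]
  have hysum : y = c0 • bZ 0 + c1 • bZ 1 := by
    conv_lhs => rw [← bZ.sum_repr y]
    rw [Fin.sum_univ_two]
  set u0 : ℂ := ι (bQ 0); set u1 : ℂ := ι (bQ 1)
  set v0 : ℂ := e 1 (bQ 0); set v1 : ℂ := e 1 (bQ 1)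
  have hx1 : ι (algebraMap (RingOfIntegers K) K x) = (a0 : ℂ) * u0 + (a1 : ℂ) * u1 := by
    rw [hxsum]; push_cast [zsmul_eq_mul, hbZQ]; simp only [map_add, map_mul, map_intCast]; rfl
  have hy1 : ι (algebraMap (RingOfIntegers K) K y) = (c0 : ℂ) * u0 + (c1 : ℂ) * u1 := by
    rw [hysum]; push_cast [zsmul_eq_mul, hbZQ]; simp only [map_add, map_mul, map_intCast]; rfl
  have hx2 : conj (ι (algebraMap (RingOfIntegers K) K x)) = (a0 : ℂ) * v0 + (a1 : ℂ) * v1 := by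
    rw [hconj, hxsum]; push_cast [zsmul_eq_mul, hbZQ]; simp only [map_add, map_mul, map_intCast]; rfl
  have hy2 : conj (ι (algebraMap (RingOfIntegers K) K y)) = (c0 : ℂ) * v0 + (c1 : ℂ) * v1 := by
    rw [hconj, hysum]; push_cast [zsmul_eq_mul, hbZQ]; simp only [map_add, map_mul, map_intCast]; rfl
  have hDuv : D = u0 * v1 - v0 * u1 := by
    simp only [hDdef, he0, hιa]; rfl
  refine ⟨if 0 ≤ t then -(a0 * c1 - a1 * c0) else (a0 * c1 - a1 * c0), ?_⟩
  have hF : Complex.I * (ι (algebraMap (RingOfIntegers K) K x) * conj (ι (algebraMap (RingOfIntegers K) K y))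
        - conj (ι (algebraMap (RingOfIntegers K) K x)) * ι (algebraMap (RingOfIntegers K) K y))
      = ((a0 * c1 - a1 * c0 : ℤ) : ℂ) * (Complex.I * D) := by
    rw [hx2, hy2, hx1, hy1, hDuv]; push_cast; ring
  rw [hF, hDt]
  have hID : Complex.I * ((t : ℂ) * Complex.I) = ((-t : ℝ) : ℂ) := by
    push_cast; rw [mul_comm, mul_assoc, Complex.I_mul_I]; ring
  rw [hID]
  by_cases ht : 0 ≤ t
  · rw [if_pos ht]
    have h5 : Real.sqrt (-(NumberField.discr K : ℝ)) = t := by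
      rw [← habs]; exact abs_of_nonneg ht
    rw [h5]; push_cast; ring
  · rw [if_neg ht]
    have h5 : Real.sqrt (-(NumberField.discr K : ℝ)) = -t := by
      rw [← habs]; exact abs_of_neg (lt_of_not_ge ht)
    rw [h5]


/-- For `M ∈ SL₂(O_K)` (entries embedded in `ℂ` via a fixed embedding `ι`
of the imaginary quadratic field `K`), the curvature `i(βδ̄−β̄δ)` and co-curvature
`i(αγ̄−ᾱγ)` of the Bianchi circle `M(ℝ̂)` are integer multiples of `√(−Δ)`. -/
theorem stmt1 (K : Type) [Field K] [NumberField K]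
    (hdeg : Module.finrank ℚ K = 2) (hdisc : NumberField.discr K < 0)
    (ι : K →+* ℂ)
    (M : Matrix.SpecialLinearGroup (Fin 2) (RingOfIntegers K))
    (α β γ δ : ℂ)
    (hα : α = ι (algebraMap (RingOfIntegers K) K (M.1 0 0)))
    (hγ : γ = ι (algebraMap (RingOfIntegers K) K (M.1 0 1)))
    (hβ : β = ι (algebraMap (RingOfIntegers K) K (M.1 1 0)))
    (hδ : δ = ι (algebraMap (RingOfIntegers K) K (M.1 1 1))) :
    ∃ m n : ℤ,
      Complex.I * (β * conj δ - conj β * δ)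
        = (m : ℂ) * (Real.sqrt (-(NumberField.discr K : ℝ)) : ℂ) ∧
      Complex.I * (α * conj γ - conj α * γ)
        = (n : ℂ) * (Real.sqrt (-(NumberField.discr K : ℝ)) : ℂ) := by
  obtain ⟨m, hm⟩ := bianchi_key K hdeg hdisc ι (M.1 1 0) (M.1 1 1)
  obtain ⟨n, hn⟩ := bianchi_key K hdeg hdisc ι (M.1 0 0) (M.1 0 1)
  exact ⟨m, n, by rw [hβ, hδ]; exact hm, by rw [hα, hγ]; exact hn⟩
end

section
/- Suppose K ≠ ℚ(i). For M ∈ SL₂(O_K), the Möbius image M(ℝ̂) equals ℝ̂ = ℝ ∪ {∞} (as subsets of ℂ ∪ {∞}) if and only if all four entries of M are rational integers, i.e. M ∈ SL₂(ℤ). -/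
open Complex ComplexConjugate NumberField OnePoint

/-- The finite part of the Möbius image of the extended real line `ℝ̂` under the matrix
`[[α,γ],[β,δ]]`: the set `{(αx+γ)/(βx+δ) : x ∈ ℝ, βx+δ ≠ 0} ∪ {α/β if β ≠ 0}`. -/
def mobiusFin (α β γ δ : ℂ) : Set ℂ :=
  {z | (∃ x : ℝ, β * (x : ℂ) + δ ≠ 0 ∧ z = (α * x + γ) / (β * x + δ)) ∨ (β ≠ 0 ∧ z = α / β)}

/-- The Möbius image of `ℝ̂ = ℝ ∪ {∞}` in `ℂ ∪ {∞}` under the matrix `[[α,γ],[β,δ]]`;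
`∞` belongs to it iff `β = 0` or `δ/β ∈ ℝ`. -/
def mobius (α β γ δ : ℂ) : Set (OnePoint ℂ) :=
  {w | (∃ z ∈ mobiusFin α β γ δ, w = (z : OnePoint ℂ)) ∨
       ((β = 0 ∨ ∃ x : ℝ, δ = β * (x : ℂ)) ∧ w = ∞)}

/-- The extended real line `ℝ̂ = ℝ ∪ {∞}` as a subset of `ℂ ∪ {∞}`. -/
def rhat : Set (OnePoint ℂ) :=
  {w | (∃ x : ℝ, w = ((x : ℂ) : OnePoint ℂ)) ∨ w = ∞}

/-- The embedding of the ring of integers of `K` into `ℂ` induced by `ι : K →+* ℂ`. -/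
noncomputable def emb (K : Type) [Field K] [NumberField K] (ι : K →+* ℂ)
    (x : RingOfIntegers K) : ℂ := ι (algebraMap (RingOfIntegers K) K x)

/-- The `K`-Bianchi circle attached to `M ∈ SL₂(O_K)`: the Möbius image `M(ℝ̂) ⊆ ℂ ∪ {∞}`. -/
noncomputable def bianchiCircle (K : Type) [Field K] [NumberField K] (ι : K →+* ℂ)
    (M : Matrix.SpecialLinearGroup (Fin 2) (RingOfIntegers K)) : Set (OnePoint ℂ) :=
  mobius (emb K ι (M.1 0 0)) (emb K ι (M.1 1 0)) (emb K ι (M.1 0 1)) (emb K ι (M.1 1 1))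

lemma mobius_real (a b c d : ℝ) (hdet : a * d - c * b = 1) :
    mobius (a : ℂ) (b : ℂ) (c : ℂ) (d : ℂ) = rhat := by
  have hdetC : (a : ℂ) * d - (c : ℂ) * b = 1 := by exact_mod_cast hdet
  ext w
  constructor
  · rintro (⟨z, hz, rfl⟩ | ⟨-, rfl⟩)
    · rcases hz with ⟨x, hne, rfl⟩ | ⟨hb, rfl⟩
      · left
        refine ⟨(a * x + c) / (b * x + d), ?_⟩
        norm_cast
      · left
        exact ⟨a / b, by norm_cast⟩
    · right; rfl
  · rintro (⟨x, rfl⟩ | rfl)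
    · left
      by_cases hc : (a : ℂ) - b * x = 0
      · -- x = a / b with b ≠ 0
        have hb : (b : ℂ) ≠ 0 := by
          intro hb0
          rw [hb0, zero_mul, sub_zero] at hc
          rw [hb0] at hdetC
          rw [hc] at hdetC
          simp at hdetC
        refine ⟨(a : ℂ) / b, Or.inr ⟨hb, rfl⟩, ?_⟩
        congr 1
        field_simp
        linear_combination -hc
      · set t : ℂ := ((d : ℂ) * x - c) / ((a : ℂ) - b * x) with ht
        have htr : ∃ tr : ℝ, t = (tr : ℂ) := by
          refine ⟨(d * x - c) / (a - b * x), ?_⟩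
          rw [ht]; norm_cast
        obtain ⟨tr, htr⟩ := htr
        have hden : ((b : ℂ) * tr + d) * ((a : ℂ) - b * x) = 1 := by
          rw [← htr, ht]
          field_simp
          linear_combination hdetC
        have hdne : (b : ℂ) * tr + d ≠ 0 := by
          intro h0
          rw [h0, zero_mul] at hden
          exact zero_ne_one hden
        have hnum : ((a : ℂ) * tr + c) * ((a : ℂ) - b * x) = (x : ℂ) := by
          rw [← htr, ht]
          rw [add_mul, mul_assoc, div_mul_cancel₀ _ hc]
          linear_combination (x : ℂ) * hdetC
        refine ⟨(x : ℂ), Or.inl ⟨tr, hdne, ?_⟩, rfl⟩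
        rw [eq_div_iff hdne]
        apply mul_right_cancel₀ hc
        linear_combination (x : ℂ) * hden - hnum
    · right
      refine ⟨?_, rfl⟩
      by_cases hb : (b : ℂ) = 0
      · exact Or.inl hb
      · right
        refine ⟨d / b, ?_⟩
        have hbr : (b : ℝ) ≠ 0 := by exact_mod_cast hb
        push_cast
        field_simp

lemma mobius_eq_imp (α β γ δ : ℂ) (hdet : α * δ - γ * β = 1)
    (h : mobius α β γ δ = rhat) :
    (conj α = α ∧ conj β = β ∧ conj γ = γ ∧ conj δ = δ) ∨
    (conj α = -α ∧ conj β = -β ∧ conj γ = -γ ∧ conj δ = -δ) := by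
  have hreal : ∀ x : ℝ, β * x + δ ≠ 0 → ∃ r : ℝ, (α * x + γ) / (β * x + δ) = (r : ℂ) := by
    intro x hne
    have hmem : ((((α * x + γ) / (β * x + δ)) : ℂ) : OnePoint ℂ) ∈ mobius α β γ δ :=
      Or.inl ⟨_, Or.inl ⟨x, hne, rfl⟩, rfl⟩
    rw [h] at hmem
    rcases hmem with ⟨r, hr⟩ | hbad
    · exact ⟨r, OnePoint.coe_eq_coe.mp hr⟩
    · exact absurd hbad (OnePoint.coe_ne_infty _)
  set g : ℝ → ℂ := fun x =>
    (α * x + γ) * (conj β * x + conj δ) - (conj α * x + conj γ) * (β * x + δ) with hgdef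
  have hg0 : ∀ x : ℝ, β * x + δ ≠ 0 → g x = 0 := by
    intro x hne
    obtain ⟨r, hr⟩ := hreal x hne
    have hcne : conj β * x + conj δ ≠ 0 := by
      intro h0
      apply hne
      have := congrArg conj h0
      simpa [map_add, map_mul, Complex.conj_conj, Complex.conj_ofReal] using this
    have h1 : (conj α * x + conj γ) / (conj β * x + conj δ) = (α * x + γ) / (β * x + δ) := by
      have h2 := congrArg conj hr
      rw [map_div₀, map_add, map_add, map_mul, map_mul, Complex.conj_ofReal,
        Complex.conj_ofReal] at h2
      rw [h2, hr]
    rw [div_eq_div_iff hcne hne] at h1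
    simp only [hgdef]
    linear_combination -h1
  have hgcont : Continuous g := by
    simp only [hgdef]
    fun_prop
  have hgall : ∀ x : ℝ, g x = 0 := by
    by_cases hroot : ∃ s : ℝ, β * s + δ = 0
    · obtain ⟨s, hs⟩ := hroot
      have hβ : β ≠ 0 ∨ β = 0 := (em _).symm.imp id id
      have heqon : Set.EqOn g (fun _ => 0) {s}ᶜ := by
        intro x hx
        apply hg0
        intro h0
        apply hx
        by_cases hb0 : β = 0
        · rw [hb0, zero_mul, zero_add] at h0 hs
          rw [h0] at hs
          -- hs : δ = 0 and h0 : δ = 0; need contradiction with det? both same...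
          exfalso
          rw [hb0, h0] at hdet
          simp at hdet
        · have : (x : ℂ) = (s : ℂ) := by
            have hsub : β * ((x : ℂ) - s) = 0 := by linear_combination h0 - hs
            rcases mul_eq_zero.mp hsub with h | h
            · exact absurd h hb0
            · linear_combination h
          have : x = s := by exact_mod_cast this
          simp [this]
      have := Continuous.ext_on (dense_compl_singleton s) hgcont continuous_const heqon
      intro x
      exact congrFun this x
    · intro x
      exact hg0 x (fun h0 => hroot ⟨x, h0⟩)
  have h0 := hgall 0
  have h1 := hgall 1
  have h2 := hgall (-1)
  simp only [hgdef] at h0 h1 h2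
  push_cast at h0 h1 h2
  have ca : α * conj β - conj α * β = 0 := by linear_combination (h1 + h2) / 2 - h0
  have cb : α * conj δ + γ * conj β - conj α * δ - conj γ * β = 0 := by
    linear_combination (h1 - h2) / 2
  have cc : γ * conj δ - conj γ * δ = 0 := by linear_combination h0
  have hdetc : conj α * conj δ - conj γ * conj β = 1 := by
    have := congrArg conj hdet
    simpa [map_sub, map_mul, map_one] using this
  set t := α * conj δ - β * conj γ with htdef
  have hα : α = t * conj α := by
    linear_combination (-(conj γ)) * ca - α * hdetc
  have hβ : β = t * conj β := by
    linear_combination (-(conj δ)) * ca - β * hdetc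
  have hγ : γ = t * conj γ := by
    linear_combination (conj α) * cc - γ * hdetc - (conj γ) * cb
  have hδ : δ = t * conj δ := by
    linear_combination (conj β) * cc - δ * hdetc - (conj δ) * cb
  have ht2 : t * t = 1 := by
    calc t * t = t * t * (conj α * conj δ - conj γ * conj β) := by rw [hdetc]; ring
    _ = (t * conj α) * (t * conj δ) - (t * conj γ) * (t * conj β) := by ring
    _ = α * δ - γ * β := by rw [← hα, ← hδ, ← hγ, ← hβ]
    _ = 1 := hdet
  rcases mul_self_eq_one_iff.mp ht2 with ht | ht
  · left
    rw [ht, one_mul] at hα hβ hγ hδ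
    exact ⟨hα.symm, hβ.symm, hγ.symm, hδ.symm⟩
  · right
    rw [ht] at hα hβ hγ hδ
    refine ⟨?_, ?_, ?_, ?_⟩
    · linear_combination hα
    · linear_combination hβ
    · linear_combination hγ
    · linear_combination hδ

section NT

variable (K : Type) [Field K] [NumberField K]

lemma exists_nonreal (hdeg : Module.finrank ℚ K = 2) (hdisc : NumberField.discr K < 0)
    (ι : K →+* ℂ) : ∃ y : K, conj (ι y) ≠ ι y := by
  classical
  by_contra hcon
  push_neg at hcon
  -- every embedding is real
  have hall : ∀ σ : K →+* ℂ, ∀ y : K, conj (σ y) = σ y := by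
    intro σ
    by_contra hσ
    push_neg at hσ
    obtain ⟨y0, hy0⟩ := hσ
    set σ' : K →+* ℂ := (starRingEnd ℂ).comp σ with hσ'def
    have h1 : σ' ≠ σ := by
      intro he
      exact hy0 (congrFun (congrArg DFunLike.coe he) y0)
    have h2 : ι ≠ σ := by
      intro he; exact hy0 (he ▸ hcon y0)
    have h3 : ι ≠ σ' := by
      intro he
      have := hcon y0
      rw [he] at this
      -- this : conj (σ' y0) = σ' y0, i.e. σ y0 = conj (σ y0)
      simp only [hσ'def, RingHom.coe_comp, Function.comp_apply, Complex.conj_conj] at this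
      exact hy0 this.symm
    have hcard : ({ι, σ, σ'} : Finset (K →+* ℂ)).card = 3 := by
      rw [Finset.card_insert_of_notMem (by simp [h2, h3]),
        Finset.card_insert_of_notMem (by simp [Ne.symm h1]), Finset.card_singleton]
    have hle := Finset.card_le_univ ({ι, σ, σ'} : Finset (K →+* ℂ))
    rw [hcard, NumberField.Embeddings.card K ℂ, hdeg] at hle
    omega
  -- all embeddings real ⇒ discr ≥ 0
  have hcardidx : Fintype.card (Module.Free.ChooseBasisIndex ℤ (RingOfIntegers K))
      = Fintype.card (K →ₐ[ℚ] ℂ) := by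
    rw [AlgHom.card, ← Module.finrank_eq_card_chooseBasisIndex, RingOfIntegers.rank]
  let e := Fintype.equivOfCardEq hcardidx
  have hdiscr := Algebra.discr_eq_det_embeddingsMatrixReindex_pow_two ℚ ℂ (integralBasis K) e
  set A := Algebra.embeddingsMatrixReindex ℚ ℂ (integralBasis K) e with hA
  have hAreal : ∀ i j, conj (A i j) = A i j := by
    intro i j
    have : A i j = (e j) (integralBasis K i) := rfl
    rw [this]
    exact hall (e j).toRingHom _
  have hdet : conj A.det = A.det := by
    have h1 : conj A.det = (A.map (starRingEnd ℂ)).det := by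
      simpa using (RingHom.map_det (starRingEnd ℂ) A).symm ▸ rfl
    rw [← RingHom.mapMatrix_apply] at h1
    have h2 : A.map (starRingEnd ℂ) = A := by
      ext i j; exact hAreal i j
    rw [h1]
    rw [RingHom.mapMatrix_apply, h2]
  rw [Complex.conj_eq_iff_re] at hdet
  have h0 : ((NumberField.discr K : ℚ) : ℂ) = A.det ^ 2 := by
    rw [NumberField.coe_discr]
    rw [← hdiscr]
    exact (eq_ratCast (algebraMap ℚ ℂ) _).symm
  have h1 : ((NumberField.discr K : ℚ) : ℂ) = (((A.det.re) ^ 2 : ℝ) : ℂ) := by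
    rw [h0, ← hdet]
    norm_cast
  have h2 : ((NumberField.discr K : ℝ)) = (A.det.re) ^ 2 := by exact_mod_cast h1
  nlinarith [sq_nonneg A.det.re, show ((NumberField.discr K : ℝ)) < 0 by exact_mod_cast hdisc]

lemma real_rat (hdeg : Module.finrank ℚ K = 2) (hdisc : NumberField.discr K < 0)
    (ι : K →+* ℂ) {z : K} (hz : conj (ι z) = ι z) : ∃ q : ℚ, z = (q : K) := by
  classical
  obtain ⟨y, hy⟩ := exists_nonreal K hdeg hdisc ι
  -- the family ![1, y] is linearly independent over ℚ
  have hrat : ∀ q : ℚ, conj (ι (q : K)) = ι (q : K) := by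
    intro q
    rw [map_ratCast ι q]
    simp
  have hyirr : ∀ q : ℚ, y ≠ (q : K) := by
    intro q hq
    exact hy (hq ▸ hrat q)
  have hli : LinearIndependent ℚ ![(1 : K), y] := by
    rw [LinearIndependent.pair_iff' (by norm_num)]
    intro s hs
    exact hyirr s (by rw [← hs, Rat.smul_def, mul_one])
  let hb := basisOfLinearIndependentOfCardEqFinrank hli (by simp [hdeg])
  have hbe : ⇑hb = ![(1 : K), y] := coe_basisOfLinearIndependentOfCardEqFinrank _ _
  -- expand z
  have hrepr := hb.sum_repr z
  rw [Fin.sum_univ_two, hbe] at hrepr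
  simp only [Matrix.cons_val_zero, Matrix.cons_val_one, Matrix.head_cons] at hrepr
  set c0 := hb.repr z 0
  set c1 := hb.repr z 1
  -- apply ι and conj
  have himg : ι z = (c0 : ℂ) + (c1 : ℂ) * ι y := by
    rw [← hrepr]
    rw [map_add]
    have e0 : ι (c0 • (1 : K)) = (c0 : ℂ) := by
      rw [Rat.smul_def, mul_one, map_ratCast]
    have e1 : ι (c1 • y) = (c1 : ℂ) * ι y := by
      rw [Rat.smul_def, map_mul, map_ratCast]
    rw [e0, e1]
  have hconj := hz
  rw [himg] at hconj
  simp only [map_add, map_mul, map_ratCast] at hconj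
  have hc1 : (c1 : ℂ) * (conj (ι y) - ι y) = 0 := by linear_combination hconj
  have hc10 : c1 = 0 := by
    rcases mul_eq_zero.mp hc1 with h | h
    · exact_mod_cast h
    · exact absurd (by linear_combination h) hy
  refine ⟨c0, ?_⟩
  rw [← hrepr, hc10]
  rw [Rat.smul_def, mul_one]
  simp

lemma rat_int {x : RingOfIntegers K} {q : ℚ} (h : algebraMap (RingOfIntegers K) K x = (q : K)) :
    ∃ n : ℤ, q = (n : ℚ) := by
  have hint : IsIntegral ℤ (algebraMap (RingOfIntegers K) K x) := RingOfIntegers.isIntegral_coe x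
  rw [h] at hint
  have : (q : K) = algebraMap ℚ K q := by simp [eq_ratCast]
  rw [this] at hint
  have hq : IsIntegral ℤ q :=
    (isIntegral_algebraMap_iff ((algebraMap ℚ K).injective)).mp hint
  obtain ⟨n, hn⟩ := IsIntegrallyClosed.isIntegral_iff.mp hq
  exact ⟨n, by exact_mod_cast hn.symm⟩

lemma neg_core (hdeg : Module.finrank ℚ K = 2) (hdisc : NumberField.discr K < 0)
    (ι : K →+* ℂ) (hKi : ∀ x : K, ι x ≠ Complex.I)
    (u a b c d : RingOfIntegers K) (hu : u ≠ 0)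
    (hWu : conj (ι (algebraMap (RingOfIntegers K) K u)) = -ι (algebraMap (RingOfIntegers K) K u))
    (ha : conj (ι (algebraMap (RingOfIntegers K) K a)) = -ι (algebraMap (RingOfIntegers K) K a))
    (hb : conj (ι (algebraMap (RingOfIntegers K) K b)) = -ι (algebraMap (RingOfIntegers K) K b))
    (hc : conj (ι (algebraMap (RingOfIntegers K) K c)) = -ι (algebraMap (RingOfIntegers K) K c))
    (hd : conj (ι (algebraMap (RingOfIntegers K) K d)) = -ι (algebraMap (RingOfIntegers K) K d))
    (hdet : a * d - b * c = 1) : False := by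
  classical
  set φ := algebraMap (RingOfIntegers K) K with hφ
  have hφinj : Function.Injective φ := IsFractionRing.injective (RingOfIntegers K) K
  have hιinj : Function.Injective ι := ι.injective
  set U := φ u with hUdef
  have hU0 : U ≠ 0 := fun h => hu (hφinj (by rw [map_zero, ← hUdef]; exact h))
  have hιU0 : ι U ≠ 0 := fun h => hU0 (hιinj (by rw [h, map_zero]))
  -- ratios are rational
  have hratio : ∀ v : K, conj (ι v) = -ι v → ∃ q : ℚ, v = (q : K) * U := by
    intro v hv
    have hq : conj (ι (v / U)) = ι (v / U) := by
      rw [map_div₀, map_div₀, hv, hWu, neg_div_neg_eq]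
    obtain ⟨q, hq⟩ := real_rat K hdeg hdisc ι hq
    rw [div_eq_iff hU0] at hq
    exact ⟨q, hq⟩
  obtain ⟨qa, hqa⟩ := hratio (φ a) ha
  obtain ⟨qb, hqb⟩ := hratio (φ b) hb
  obtain ⟨qc, hqc⟩ := hratio (φ c) hc
  obtain ⟨qd, hqd⟩ := hratio (φ d) hd
  -- the determinant equation in K
  have hdetK : φ a * φ d - φ b * φ c = 1 := by
    have := congrArg φ hdet
    simpa only [map_sub, map_mul, map_one] using this
  -- common denominator
  set N : ℤ := (qa.den : ℤ) * qb.den * qc.den * qd.den with hNdef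
  have hNne : (N : ℚ) ≠ 0 := by
    rw [hNdef]; push_cast
    positivity
  set pa : ℤ := qa.num * ((qb.den : ℤ) * qc.den * qd.den) with hpadef
  set pb : ℤ := qb.num * ((qa.den : ℤ) * qc.den * qd.den) with hpbdef
  set pc : ℤ := qc.num * ((qa.den : ℤ) * qb.den * qd.den) with hpcdef
  set pd : ℤ := qd.num * ((qa.den : ℤ) * qb.den * qc.den) with hpddef
  have hpaq : (pa : ℚ) = qa * N := by
    rw [hpadef, hNdef]; push_cast
    rw [← Rat.mul_den_eq_num]; ring
  have hpbq : (pb : ℚ) = qb * N := by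
    rw [hpbdef, hNdef]; push_cast
    rw [← Rat.mul_den_eq_num]; ring
  have hpcq : (pc : ℚ) = qc * N := by
    rw [hpcdef, hNdef]; push_cast
    rw [← Rat.mul_den_eq_num]; ring
  have hpdq : (pd : ℚ) = qd * N := by
    rw [hpddef, hNdef]; push_cast
    rw [← Rat.mul_den_eq_num]; ring
  -- gcd and Bezout
  set G1 : ℤ := (Int.gcd pa pb : ℤ) with hG1def
  set G2 : ℤ := (Int.gcd G1 pc : ℤ) with hG2def
  set G3 : ℤ := (Int.gcd G2 pd : ℤ) with hG3def
  have hdvd_a : G3 ∣ pa :=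
    dvd_trans (dvd_trans (Int.gcd_dvd_left _ _) (Int.gcd_dvd_left _ _)) (Int.gcd_dvd_left _ _)
  have hdvd_b : G3 ∣ pb :=
    dvd_trans (dvd_trans (Int.gcd_dvd_left _ _) (Int.gcd_dvd_left _ _)) (Int.gcd_dvd_right _ _)
  have hdvd_c : G3 ∣ pc := dvd_trans (Int.gcd_dvd_left _ _) (Int.gcd_dvd_right _ _)
  have hdvd_d : G3 ∣ pd := Int.gcd_dvd_right _ _
  have hbez : ∃ w1 w2 w3 w4 : ℤ, w1 * pa + w2 * pb + w3 * pc + w4 * pd = G3 := by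
    have e1 := Int.gcd_eq_gcd_ab pa pb
    have e2 := Int.gcd_eq_gcd_ab G1 pc
    have e3 := Int.gcd_eq_gcd_ab G2 pd
    refine ⟨Int.gcdA pa pb * Int.gcdA G1 pc * Int.gcdA G2 pd,
            Int.gcdB pa pb * Int.gcdA G1 pc * Int.gcdA G2 pd,
            Int.gcdB G1 pc * Int.gcdA G2 pd,
            Int.gcdB G2 pd, ?_⟩
    rw [← hG1def] at e1
    rw [← hG2def] at e2
    rw [← hG3def] at e3
    linear_combination (-1 : ℤ) * e3 - Int.gcdA G2 pd * e2
      - (Int.gcdA G1 pc * Int.gcdA G2 pd) * e1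
  obtain ⟨w1, w2, w3, w4, hbez⟩ := hbez
  -- G3 ≠ 0
  have hG30 : G3 ≠ 0 := by
    intro h3
    rw [hG3def] at h3
    norm_cast at h3
    rw [Int.gcd_eq_zero_iff] at h3
    obtain ⟨h2', hpd0⟩ := h3
    rw [hG2def] at h2'
    norm_cast at h2'
    rw [Int.gcd_eq_zero_iff] at h2'
    obtain ⟨h1', hpc0⟩ := h2'
    rw [hG1def] at h1'
    norm_cast at h1'
    rw [Int.gcd_eq_zero_iff] at h1'
    obtain ⟨hpa0, hpb0⟩ := h1'
    have hqa0 : qa = 0 := by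
      have := hpaq; rw [hpa0] at this; push_cast at this
      rcases mul_eq_zero.mp this.symm with h | h
      · exact h
      · exact absurd h hNne
    have hqd0 : qd = 0 := by
      have := hpdq; rw [hpd0] at this; push_cast at this
      rcases mul_eq_zero.mp this.symm with h | h
      · exact h
      · exact absurd h hNne
    have hqb0 : qb = 0 := by
      have := hpbq; rw [hpb0] at this; push_cast at this
      rcases mul_eq_zero.mp this.symm with h | h
      · exact h
      · exact absurd h hNne
    rw [hqa0] at hqa
    rw [hqb0] at hqb
    rw [hqa, hqb] at hdetK
    simp at hdetK
  -- exact divisions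
  obtain ⟨ka, hka⟩ := hdvd_a
  obtain ⟨kb, hkb⟩ := hdvd_b
  obtain ⟨kc, hkc⟩ := hdvd_c
  obtain ⟨kd, hkd⟩ := hdvd_d
  -- the Bezout element
  set z : RingOfIntegers K :=
    (w1 : RingOfIntegers K) * a + (w2 : RingOfIntegers K) * b
      + (w3 : RingOfIntegers K) * c + (w4 : RingOfIntegers K) * d with hzdef
  set s : ℚ := (w1 : ℚ) * qa + (w2 : ℚ) * qb + (w3 : ℚ) * qc + (w4 : ℚ) * qd with hsdef
  have hZexp : φ z = (s : K) * U := by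
    rw [hzdef, map_add, map_add, map_add, map_mul, map_mul, map_mul, map_mul,
      map_intCast, map_intCast, map_intCast, map_intCast, hqa, hqb, hqc, hqd, hsdef]
    push_cast
    ring
  have hsN : s * (N : ℚ) = (G3 : ℚ) := by
    have hq := congrArg (fun t : ℤ => (t : ℚ)) hbez
    push_cast at hq
    rw [hpaq, hpbq, hpcq, hpdq] at hq
    rw [hsdef]
    linear_combination hq
  have hs0 : s ≠ 0 := by
    intro h0
    rw [h0, zero_mul] at hsN
    exact hG30 (by exact_mod_cast hsN.symm)
  -- scalar relations: qa = ka * s etc.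
  have hkgen : ∀ (q : ℚ) (p k : ℤ), (p : ℚ) = q * N → p = G3 * k → (k : ℚ) * s = q := by
    intro q p k hpq hpk
    apply mul_right_cancel₀ hNne
    rw [mul_assoc, hsN, ← hpq, hpk]
    push_cast
    ring
  have hkas := hkgen qa pa ka hpaq hka
  have hkbs := hkgen qb pb kb hpbq hkb
  have hkcs := hkgen qc pc kc hpcq hkc
  have hkds := hkgen qd pd kd hpdq hkd
  -- entries as integer multiples of Z := φ z
  have hA : φ a = ((ka : ℚ) : K) * φ z := by
    rw [hqa, hZexp, ← hkas]; push_cast; ring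
  have hB : φ b = ((kb : ℚ) : K) * φ z := by
    rw [hqb, hZexp, ← hkbs]; push_cast; ring
  have hC : φ c = ((kc : ℚ) : K) * φ z := by
    rw [hqc, hZexp, ← hkcs]; push_cast; ring
  have hD : φ d = ((kd : ℚ) : K) * φ z := by
    rw [hqd, hZexp, ← hkds]; push_cast; ring
  -- Z is "purely imaginary" and nonzero
  have hiZ : ι (φ z) = (s : ℂ) * ι U := by
    rw [hZexp, map_mul, map_ratCast]
  have hconjZ : conj (ι (φ z)) = -ι (φ z) := by
    rw [hiZ, map_mul, map_ratCast, hWu]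
    ring
  have hZ0 : φ z ≠ 0 := by
    rw [hZexp]
    apply mul_ne_zero _ hU0
    exact_mod_cast hs0
  have hιZ0 : ι (φ z) ≠ 0 := fun h => hZ0 (hιinj (by rw [h, map_zero]))
  -- Z² is a negative integer
  have hZsqreal : conj (ι (φ z * φ z)) = ι (φ z * φ z) := by
    rw [map_mul, map_mul, hconjZ]
    ring
  obtain ⟨qz, hqz⟩ := real_rat K hdeg hdisc ι hZsqreal
  obtain ⟨n, hn⟩ := rat_int K (x := z * z) (q := qz) (by rw [map_mul, ← hqz])
  have hzz : φ z * φ z = ((n : ℚ) : K) := by rw [hqz, hn]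
  -- n is negative
  have hnneg : n < 0 := by
    have h1 : ((n : ℚ) : ℂ) = ι (φ z) * ι (φ z) := by
      rw [← map_mul, ← map_ratCast ι, ← hzz]
    have h2 : ι (φ z) * ι (φ z) = -((Complex.normSq (ι (φ z)) : ℝ) : ℂ) := by
      rw [← Complex.mul_conj (ι (φ z)), hconjZ]
      ring
    have h3 : ((n : ℝ)) = -Complex.normSq (ι (φ z)) := by
      have := h1.trans h2
      exact_mod_cast this
    have h4 : 0 < Complex.normSq (ι (φ z)) := Complex.normSq_pos.mpr hιZ0
    have : (n : ℝ) < 0 := by linarith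
    exact_mod_cast this
  -- determinant gives (ka kd - kb kc) * n = 1
  have hzz' : φ z * φ z = ((n : ℤ) : K) := by rw [hzz]; push_cast; ring
  have hdetk : ((ka * kd - kb * kc) * n : ℤ) = 1 := by
    have hq : (((ka * kd - kb * kc) * n : ℤ) : ℚ) = (1 : ℚ) := by
      apply Rat.cast_injective (α := K)
      push_cast at hA hB hC hD ⊢
      linear_combination hdetK - ((ka : K) * (kd : K) - (kb : K) * (kc : K)) * hzz'
        - ((kd : K) * φ z) * hA + ((kc : K) * φ z) * hB + (φ b) * hC - (φ a) * hD
    exact_mod_cast hq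
  have hn1 : n = -1 := by
    have hu : IsUnit n := IsUnit.of_mul_eq_one (a := n) (ka * kd - kb * kc) (by linarith [hdetk])
    rcases Int.isUnit_iff.mp hu with h | h
    · omega
    · exact h
  -- conclude i ∈ ι(K)
  have hZI : ι (φ z) * ι (φ z) = -1 := by
    rw [← map_mul, hzz, hn1]
    push_cast
    simp
  have hfac : (ι (φ z) - Complex.I) * (ι (φ z) + Complex.I) = 0 := by
    have hI : Complex.I * Complex.I = -1 := Complex.I_mul_I
    linear_combination hZI - hI
  rcases mul_eq_zero.mp hfac with h | h
  · exact hKi (φ z) (by linear_combination h)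
  · exact hKi (-φ z) (by rw [map_neg]; linear_combination -h)

lemma real_int (hdeg : Module.finrank ℚ K = 2) (hdisc : NumberField.discr K < 0)
    (ι : K →+* ℂ) {x : RingOfIntegers K} (hx : conj (emb K ι x) = emb K ι x) :
    ∃ n : ℤ, emb K ι x = (n : ℂ) := by
  obtain ⟨q, hq⟩ := real_rat K hdeg hdisc ι (z := algebraMap (RingOfIntegers K) K x) hx
  obtain ⟨n, hn⟩ := rat_int K (x := x) (q := q) hq
  refine ⟨n, ?_⟩
  rw [emb, hq, hn, map_ratCast]
  push_cast
  ring

lemma neg_case (hdeg : Module.finrank ℚ K = 2) (hdisc : NumberField.discr K < 0)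
    (ι : K →+* ℂ) (hKi : ∀ x : K, ι x ≠ Complex.I)
    (a b c d : RingOfIntegers K) (hdet : a * d - b * c = 1)
    (ha : conj (emb K ι a) = -emb K ι a) (hb : conj (emb K ι b) = -emb K ι b)
    (hc : conj (emb K ι c) = -emb K ι c) (hd : conj (emb K ι d) = -emb K ι d) : False := by
  simp only [emb] at ha hb hc hd
  by_cases ha0 : a = 0
  · have hb0 : b ≠ 0 := by
      intro hb0
      rw [ha0, hb0] at hdet
      simp at hdet
    exact neg_core K hdeg hdisc ι hKi b a b c d hb0 hb ha hb hc hd hdet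
  · exact neg_core K hdeg hdisc ι hKi a a b c d ha0 ha ha hb hc hd hdet


end NT

/-- If `K ≠ ℚ(i)` (i.e. `i` is not in the image of `K` in `ℂ`), then for
`M ∈ SL₂(O_K)` the Möbius image `M(ℝ̂)` equals `ℝ̂` iff all four entries of `M` are
rational integers, i.e. `M ∈ SL₂(ℤ)`. -/
theorem stmt2 (K : Type) [Field K] [NumberField K]
    (hdeg : Module.finrank ℚ K = 2) (hdisc : NumberField.discr K < 0)
    (ι : K →+* ℂ) (hKi : ∀ x : K, ι x ≠ Complex.I)
    (M : Matrix.SpecialLinearGroup (Fin 2) (RingOfIntegers K)) :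
    bianchiCircle K ι M = rhat ↔ ∀ i j : Fin 2, ∃ n : ℤ, emb K ι (M.1 i j) = (n : ℂ) := by
  classical
  have hdetO : M.1 0 0 * M.1 1 1 - M.1 0 1 * M.1 1 0 = 1 := by
    have := M.2
    rwa [Matrix.det_fin_two] at this
  have hdetC : emb K ι (M.1 0 0) * emb K ι (M.1 1 1)
      - emb K ι (M.1 0 1) * emb K ι (M.1 1 0) = 1 := by
    have := congrArg (fun t => ι (algebraMap (RingOfIntegers K) K t)) hdetO
    simpa [emb, map_mul, map_sub, map_one] using this
  constructor
  · intro h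
    have := mobius_eq_imp (emb K ι (M.1 0 0)) (emb K ι (M.1 1 0)) (emb K ι (M.1 0 1))
      (emb K ι (M.1 1 1)) (by linear_combination hdetC) h
    rcases this with ⟨h1, h2, h3, h4⟩ | ⟨h1, h2, h3, h4⟩
    · intro i j
      fin_cases i <;> fin_cases j
      · exact real_int K hdeg hdisc ι h1
      · exact real_int K hdeg hdisc ι h3
      · exact real_int K hdeg hdisc ι h2
      · exact real_int K hdeg hdisc ι h4
    · exact absurd (neg_case K hdeg hdisc ι hKi (M.1 0 0) (M.1 0 1) (M.1 1 0) (M.1 1 1)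
        (by linear_combination hdetO) h1 h3 h2 h4) (by simp)
  · intro h
    obtain ⟨n00, h00⟩ := h 0 0
    obtain ⟨n01, h01⟩ := h 0 1
    obtain ⟨n10, h10⟩ := h 1 0
    obtain ⟨n11, h11⟩ := h 1 1
    have hdR : (n00 : ℝ) * (n11 : ℝ) - (n01 : ℝ) * (n10 : ℝ) = 1 := by
      have : ((n00 : ℝ) * n11 - (n01 : ℝ) * n10 : ℂ) = ((1 : ℝ) : ℂ) := by
        push_cast
        rw [← h00, ← h01, ← h10, ← h11]
        linear_combination hdetC
      exact_mod_cast this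
    have := mobius_real (n00 : ℝ) (n10 : ℝ) (n01 : ℝ) (n11 : ℝ) (by linarith [hdR])
    unfold bianchiCircle
    rw [h00, h01, h10, h11]
    rw [show ((n00:ℤ):ℂ) = (((n00:ℤ):ℝ):ℂ) by push_cast; ring]
    rw [show ((n01:ℤ):ℂ) = (((n01:ℤ):ℝ):ℂ) by push_cast; ring]
    rw [show ((n10:ℤ):ℂ) = (((n10:ℤ):ℝ):ℂ) by push_cast; ring]
    rw [show ((n11:ℤ):ℂ) = (((n11:ℤ):ℝ):ℂ) by push_cast; ring]
    exact this
end

section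
/- Suppose Δ ≠ −3 (i.e. K ≠ ℚ(√−3)). Then any two distinct K-Bianchi circles have at most one common point in ℂ ∪ {∞}; that is, distinct K-Bianchi circles are either disjoint or tangent. -/
open Complex ComplexConjugate NumberField OnePoint

namespace Stmt5Aux


/-- The anti-Hermitian sesquilinear form attached to the Möbius matrix. -/
noncomputable def Bf (α β γ δ : ℂ) (x y : ℂ × ℂ) : ℂ :=
  conj (α * y.2 - β * y.1) * (δ * x.1 - γ * x.2) -
    (α * x.2 - β * x.1) * conj (δ * y.1 - γ * y.2)

/-- Lift of a point of `ℂ ∪ {∞}` to homogeneous coordinates. -/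
def lift : OnePoint ℂ → ℂ × ℂ := fun w => Option.elim w (1, 0) fun z => (z, 1)

@[simp] lemma lift_infty : lift ∞ = (1, 0) := rfl
@[simp] lemma lift_coe (z : ℂ) : lift (z : OnePoint ℂ) = (z, 1) := rfl

lemma Bf_swap (α β γ δ : ℂ) (x y : ℂ × ℂ) :
    Bf α β γ δ y x = -conj (Bf α β γ δ x y) := by
  simp only [Bf, map_sub, map_mul, Complex.conj_conj]
  ring

lemma mem_mobiusFin_iff {α β γ δ : ℂ} (hdet : α * δ - γ * β = 1) (z : ℂ) :
    z ∈ mobiusFin α β γ δ ↔ Bf α β γ δ (z, 1) (z, 1) = 0 := by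
  have hBf : Bf α β γ δ (z, 1) (z, 1)
      = conj (α - β * z) * (δ * z - γ) - (α - β * z) * conj (δ * z - γ) := by
    simp [Bf]
  rw [hBf]
  constructor
  · rintro (⟨x, hden, hz⟩ | ⟨hβ, hz⟩)
    · rw [eq_div_iff hden] at hz  -- hz : z * (β * x + δ) = α * x + γ
      have h1 : (α - β * z) * (β * (x : ℂ) + δ) = 1 := by linear_combination hdet - β * hz
      have h2 : (δ * z - γ) * (β * (x : ℂ) + δ) = (x : ℂ) := by
        linear_combination (x : ℂ) * hdet + δ * hz
      have h1c : conj (α - β * z) * conj (β * (x : ℂ) + δ) = 1 := by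
        rw [← map_mul, h1, map_one]
      have h2c : conj (δ * z - γ) * conj (β * (x : ℂ) + δ) = (x : ℂ) := by
        rw [← map_mul, h2, Complex.conj_ofReal]
      have hdc : (β * (x : ℂ) + δ) * conj (β * (x : ℂ) + δ) ≠ 0 :=
        mul_ne_zero hden ((map_ne_zero (starRingEnd ℂ)).mpr hden)
      have key : (conj (α - β * z) * (δ * z - γ) - (α - β * z) * conj (δ * z - γ)) *
          ((β * (x : ℂ) + δ) * conj (β * (x : ℂ) + δ)) = 0 := by
        linear_combination (conj (α - β * z) * conj (β * (x : ℂ) + δ)) * h2 +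
          (x : ℂ) * h1c - (conj (δ * z - γ) * conj (β * (x : ℂ) + δ)) * h1 - h2c
      exact (mul_eq_zero.1 key).resolve_right hdc
    · have hA : α - β * z = 0 := by
        rw [hz]; field_simp; ring
      rw [hA]; simp
  · intro hB
    by_cases hA : α - β * z = 0
    · right
      have hβ : β ≠ 0 := by
        rintro rfl
        have hα : α = 0 := by simpa using hA
        rw [hα] at hdet; simp at hdet
      refine ⟨hβ, ?_⟩
      rw [eq_div_iff hβ]
      have := sub_eq_zero.1 hA
      linear_combination -this
    · left
      have hu : conj (conj (α - β * z) * (δ * z - γ)) = conj (α - β * z) * (δ * z - γ) := by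
        rw [map_mul, Complex.conj_conj]
        linear_combination -hB
      have hure : ((conj (α - β * z) * (δ * z - γ)).re : ℂ) = conj (α - β * z) * (δ * z - γ) :=
        Complex.conj_eq_iff_re.1 hu
      set x : ℝ := (conj (α - β * z) * (δ * z - γ)).re / Complex.normSq (α - β * z) with hxdef
      have hnsq : (Complex.normSq (α - β * z) : ℂ) ≠ 0 := by
        simpa using hA
      have hmc : (α - β * z) * conj (α - β * z) = (Complex.normSq (α - β * z) : ℂ) :=
        Complex.mul_conj _
      have hxq : (x : ℂ) = (δ * z - γ) / (α - β * z) := by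
        rw [hxdef]
        push_cast
        rw [hure, div_eq_div_iff hnsq hA]
        linear_combination (δ * z - γ) * hmc
      have hx : (x : ℂ) * (α - β * z) = δ * z - γ := by
        rw [hxq, div_mul_cancel₀ _ hA]
      have hden : (α - β * z) * (β * (x : ℂ) + δ) = 1 := by
        linear_combination hdet + β * hx
      have hden' : β * (x : ℂ) + δ ≠ 0 := by
        intro h0; rw [h0, mul_zero] at hden; exact one_ne_zero hden.symm
      refine ⟨x, hden', ?_⟩
      rw [eq_div_iff hden']
      apply mul_left_cancel₀ hA
      linear_combination z * hden - α * hx - z * hdet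


lemma infty_mem_iff {α β γ δ : ℂ} :
    (β = 0 ∨ ∃ x : ℝ, δ = β * (x : ℂ)) ↔ Bf α β γ δ (1, 0) (1, 0) = 0 := by
  have hBf : Bf α β γ δ (1, 0) (1, 0) = -(conj β * δ) + β * conj δ := by
    simp only [Bf, mul_zero, mul_one, zero_sub, sub_zero, map_neg, map_mul]
    ring
  rw [hBf]
  constructor
  · rintro (rfl | ⟨x, rfl⟩)
    · simp
    · rw [map_mul, Complex.conj_ofReal]
      ring
  · intro h
    by_cases hβ : β = 0
    · exact Or.inl hβ
    · right
      have hu : conj (conj β * δ) = conj β * δ := by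
        rw [map_mul, Complex.conj_conj]
        linear_combination h
      have hure : ((conj β * δ).re : ℂ) = conj β * δ := Complex.conj_eq_iff_re.1 hu
      refine ⟨(conj β * δ).re / Complex.normSq β, ?_⟩
      have hnsq : (Complex.normSq β : ℂ) ≠ 0 := by simpa using hβ
      have hmc : β * conj β = (Complex.normSq β : ℂ) := Complex.mul_conj _
      push_cast
      rw [mul_div_assoc', eq_div_iff hnsq, hure]
      linear_combination -δ * hmc

lemma mem_mobius_iff {α β γ δ : ℂ} (hdet : α * δ - γ * β = 1) (w : OnePoint ℂ) :
    w ∈ mobius α β γ δ ↔ Bf α β γ δ (lift w) (lift w) = 0 := by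
  cases w with
  | infty =>
    show (∞ : OnePoint ℂ) ∈ mobius α β γ δ ↔ Bf α β γ δ (1, 0) (1, 0) = 0
    rw [← infty_mem_iff (α := α) (β := β) (γ := γ) (δ := δ)]
    constructor
    · rintro (⟨z, _, hz⟩ | ⟨h, _⟩)
      · exact absurd hz.symm (OnePoint.coe_ne_infty z)
      · exact h
    · intro h
      exact Or.inr ⟨h, rfl⟩
  | coe z =>
    show (z : OnePoint ℂ) ∈ mobius α β γ δ ↔ Bf α β γ δ (z, 1) (z, 1) = 0
    rw [← mem_mobiusFin_iff hdet]
    constructor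
    · rintro (⟨z', hz', hzz⟩ | ⟨_, h⟩)
      · rwa [OnePoint.coe_eq_coe.1 hzz]
      · exact absurd h (OnePoint.coe_ne_infty z)
    · intro h
      exact Or.inl ⟨z, h, rfl⟩

section identities

variable (α β γ δ α' β' γ' δ' : ℂ)

/-- determinant identity I0. -/
lemma I0 :
    (conj α * δ - β * conj γ) * conj (conj α * δ - β * conj γ) +
      (conj β * δ - β * conj δ) * (conj α * γ - α * conj γ)
    = (α * δ - γ * β) * conj (α * δ - γ * β) := by
  simp only [map_sub, map_mul, Complex.conj_conj]
  ring

variable (x y u : ℂ × ℂ)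

lemma I1 :
    Bf α β γ δ x x * Bf α β γ δ y y - Bf α β γ δ x y * Bf α β γ δ y x
    = (α * δ - γ * β) * conj (α * δ - γ * β) *
        ((x.1 * y.2 - x.2 * y.1) * conj (x.1 * y.2 - x.2 * y.1)) := by
  simp only [Bf, map_sub, map_mul, Complex.conj_conj]
  ring

lemma I2 :
    Bf α β γ δ x x * Bf α' β' γ' δ' y y + Bf α' β' γ' δ' x x * Bf α β γ δ y y -
      Bf α β γ δ x y * Bf α' β' γ' δ' y x - Bf α' β' γ' δ' x y * Bf α β γ δ y x
    = ((conj β * δ - β * conj δ) * (conj α' * γ' - α' * conj γ') +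
        (conj β' * δ' - β' * conj δ') * (conj α * γ - α * conj γ) +
        (conj α * δ - β * conj γ) * conj (conj α' * δ' - β' * conj γ') +
        conj (conj α * δ - β * conj γ) * (conj α' * δ' - β' * conj γ')) *
        ((x.1 * y.2 - x.2 * y.1) * conj (x.1 * y.2 - x.2 * y.1)) := by
  simp only [Bf, map_sub, map_mul, Complex.conj_conj]
  ring

lemma I3 :
    (x.1 * y.2 - x.2 * y.1) * conj (x.1 * y.2 - x.2 * y.1) * Bf α β γ δ u u
    = (u.1 * y.2 - u.2 * y.1) * conj (u.1 * y.2 - u.2 * y.1) * Bf α β γ δ x x +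
      (u.1 * y.2 - u.2 * y.1) * conj (x.1 * u.2 - x.2 * u.1) * Bf α β γ δ x y +
      (x.1 * u.2 - x.2 * u.1) * conj (u.1 * y.2 - u.2 * y.1) * Bf α β γ δ y x +
      (x.1 * u.2 - x.2 * u.1) * conj (x.1 * u.2 - x.2 * u.1) * Bf α β γ δ y y := by
  simp only [Bf, map_sub, map_mul, Complex.conj_conj]
  ring

end identities



lemma im_lincomb (p0 p1 q0 q1 : ℤ) (B0 B1 : ℂ) :
    (conj ((p0 : ℂ) * B0 + (p1 : ℂ) * B1) * ((q0 : ℂ) * B0 + (q1 : ℂ) * B1)).im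
      = (p0 * q0 : ℤ) * (conj B0 * B0).im + (p0 * q1 : ℤ) * (conj B0 * B1).im +
        (p1 * q0 : ℤ) * (conj B1 * B0).im + (p1 * q1 : ℤ) * (conj B1 * B1).im := by
  simp only [map_add, map_mul, map_intCast]
  simp only [Complex.add_im, Complex.mul_im, Complex.add_re, Complex.mul_re,
    Complex.intCast_re, Complex.intCast_im]
  push_cast
  ring

lemma arith_data (K : Type) [Field K] [NumberField K]
    (hdeg : Module.finrank ℚ K = 2) (hdisc : NumberField.discr K < 0) (ι : K →+* ℂ) :
    ∃ s₀ : ℝ,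
      (∀ p q : RingOfIntegers K, ∃ n : ℤ, (conj (emb K ι p) * emb K ι q).im = n * s₀) ∧
      4 * s₀ ^ 2 = -(NumberField.discr K : ℝ) ∧
      (NumberField.discr K % 4 = 0 ∨ NumberField.discr K % 4 = 1) := by
  classical
  set ιa : K →ₐ[ℚ] ℂ := ι.toRatAlgHom with hιa_def
  have hcard : Fintype.card (K →ₐ[ℚ] ℂ) = 2 := by rw [AlgHom.card]; exact hdeg
  obtain ⟨σa, hσι⟩ : ∃ σ : K →ₐ[ℚ] ℂ, σ ≠ ιa :=
    Fintype.exists_ne_of_one_lt_card (by omega) ιa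
  have hclass : ∀ φ : K →ₐ[ℚ] ℂ, φ = ιa ∨ φ = σa := by
    intro φ
    by_contra h
    push_neg at h
    have hm1 : σa ∉ ({φ} : Finset (K →ₐ[ℚ] ℂ)) := by
      simp only [Finset.mem_singleton]
      exact fun e => h.2 e.symm
    have hm2 : ιa ∉ ({σa, φ} : Finset (K →ₐ[ℚ] ℂ)) := by
      simp only [Finset.mem_insert, Finset.mem_singleton]
      push_neg
      exact ⟨fun e => hσι e.symm, fun e => h.1 e.symm⟩
    have h3 : ({ιa, σa, φ} : Finset (K →ₐ[ℚ] ℂ)).card = 3 := by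
      rw [Finset.card_insert_of_notMem hm2, Finset.card_insert_of_notMem hm1,
        Finset.card_singleton]
    have hle := Finset.card_le_univ ({ιa, σa, φ} : Finset (K →ₐ[ℚ] ℂ))
    rw [h3, hcard] at hle
    omega
  have huniv : (Finset.univ : Finset (K →ₐ[ℚ] ℂ)) = {ιa, σa} := by
    ext φ
    simpa using hclass φ
  have htr : ∀ x : K, ((Algebra.trace ℚ K x : ℚ) : ℂ) = ιa x + σa x := by
    intro x
    rw [← eq_ratCast (algebraMap ℚ ℂ), trace_eq_sum_embeddings (E := ℂ)]
    rw [show (Finset.univ : Finset (K →ₐ[ℚ] ℂ)) = {ιa, σa} from huniv,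
      Finset.sum_pair (Ne.symm hσι)]
  have hnrm : ∀ x : K, ((Algebra.norm ℚ x : ℚ) : ℂ) = ιa x * σa x := by
    intro x
    rw [← eq_ratCast (algebraMap ℚ ℂ), Algebra.norm_eq_prod_embeddings (L := K) ℚ ℂ x]
    rw [show (Finset.univ : Finset (K →ₐ[ℚ] ℂ)) = {ιa, σa} from huniv,
      Finset.prod_pair (Ne.symm hσι)]
  -- basis of the ring of integers indexed by `Fin 2`
  have hci : Fintype.card (Module.Free.ChooseBasisIndex ℤ (RingOfIntegers K)) = 2 := by
    rw [← Module.finrank_eq_card_chooseBasisIndex, RingOfIntegers.rank, hdeg]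
  let e2 := Fintype.equivFinOfCardEq hci
  set C : Module.Basis (Fin 2) ℤ (RingOfIntegers K) := (RingOfIntegers.basis K).reindex e2 with hC_def
  set Bq : Module.Basis (Fin 2) ℚ K := (integralBasis K).reindex e2 with hBq_def
  have hBC : ∀ i, Bq i = algebraMap (RingOfIntegers K) K (C i) := by
    intro i
    rw [hBq_def, hC_def, Module.Basis.reindex_apply, Module.Basis.reindex_apply, integralBasis_apply]
  -- the equivalence between `Fin 2` and the embeddings
  let eqE : Fin 2 ≃ (K →ₐ[ℚ] ℂ) :=
    { toFun := ![ιa, σa]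
      invFun := fun φ => if φ = ιa then 0 else 1
      left_inv := by
        intro i
        fin_cases i
        · simp
        · simp [hσι]
      right_inv := by
        intro φ
        rcases hclass φ with rfl | rfl
        · simp
        · simp [hσι] }
  have heqE0 : eqE 0 = ιa := rfl
  have heqE1 : eqE 1 = σa := rfl
  -- the discriminant formula
  have hdisc_c : ((NumberField.discr K : ℝ) : ℂ)
      = (ιa (Bq 0) * σa (Bq 1) - σa (Bq 0) * ιa (Bq 1)) ^ 2 := by
    have h1 : Algebra.discr ℚ ⇑Bq = Algebra.discr ℚ ⇑(integralBasis K) := by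
      rw [hBq_def, Module.Basis.coe_reindex, Algebra.discr_reindex]
    have h2 := Algebra.discr_eq_det_embeddingsMatrixReindex_pow_two ℚ ℂ ⇑Bq eqE
    have h3 : (Algebra.embeddingsMatrixReindex ℚ ℂ ⇑Bq eqE).det
        = ιa (Bq 0) * σa (Bq 1) - σa (Bq 0) * ιa (Bq 1) := by
      rw [Matrix.det_fin_two]
      simp only [Algebra.embeddingsMatrixReindex, Algebra.embeddingsMatrix,
        Matrix.reindex_apply, Matrix.submatrix_apply, Equiv.refl_symm, Equiv.refl_apply,
        Equiv.symm_symm, Matrix.of_apply]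
      rw [heqE0, heqE1]
    rw [← h3, ← h2, h1, ← NumberField.coe_discr]
    push_cast
    rw [eq_ratCast (algebraMap ℚ ℂ)]
    push_cast
    ring
  -- identify the complex conjugate embedding
  set ιc : K →ₐ[ℚ] ℂ := ((starRingEnd ℂ).comp ι).toRatAlgHom with hιc_def
  have hιc_apply : ∀ x : K, ιc x = conj (ι x) := fun _ => rfl
  have hιa_apply : ∀ x : K, ιa x = ι x := fun _ => rfl
  have hconj : ∀ x : K, conj (ι x) = σa x := by
    rcases hclass ιc with hcase | hcase
    · -- ι is a real embedding: contradiction with discr < 0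
      exfalso
      have hreal : ∀ x : K, conj (ι x) = ι x := by
        intro x
        rw [← hιc_apply x, hcase, hιa_apply]
      have hσr : ∀ x : K, conj (σa x) = σa x := by
        intro x
        have h := htr x
        have h2 : σa x = ((Algebra.trace ℚ K x : ℚ) : ℂ) - ιa x := by
          rw [h]; ring
        rw [h2, map_sub, hιa_apply]
        rw [map_ratCast (starRingEnd ℂ), hreal x]
      set z := ιa (Bq 0) * σa (Bq 1) - σa (Bq 0) * ιa (Bq 1) with hz_def
      have hzr : conj z = z := by
        rw [hz_def]
        simp only [map_sub, map_mul, hιa_apply, hreal, hσr]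
      have hzre : (z.re : ℂ) = z := Complex.conj_eq_iff_re.1 hzr
      have : ((NumberField.discr K : ℝ) : ℂ) = ((z.re ^ 2 : ℝ) : ℂ) := by
        rw [hdisc_c]
        push_cast
        rw [hzre]
      have hre : (NumberField.discr K : ℝ) = z.re ^ 2 := Complex.ofReal_inj.1 this
      have : (0 : ℝ) ≤ (NumberField.discr K : ℝ) := hre ▸ sq_nonneg z.re
      have : (0 : ℝ) > (NumberField.discr K : ℝ) := by exact_mod_cast hdisc
      linarith
    · intro x
      rw [← hιc_apply x, hcase]
  -- the fundamental imaginary unit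
  set B0 : ℂ := emb K ι (C 0) with hB0_def
  set B1 : ℂ := emb K ι (C 1) with hB1_def
  set s₀ : ℝ := (conj B0 * B1).im with hs0_def
  have hemb_mul : ∀ x y : RingOfIntegers K, emb K ι (x * y) = emb K ι x * emb K ι y := by
    intro x y
    simp only [emb, map_mul]
  have hrepr : ∀ p : RingOfIntegers K,
      emb K ι p = ((C.repr p 0 : ℤ) : ℂ) * B0 + ((C.repr p 1 : ℤ) : ℂ) * B1 := by
    intro p
    conv_lhs => rw [show p = C.repr p 0 • C 0 + C.repr p 1 • C 1 by
      rw [← Fin.sum_univ_two (f := fun i => C.repr p i • C i), Module.Basis.sum_repr]]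
    simp only [emb, map_add, map_zsmul, zsmul_eq_mul, map_mul, map_intCast, hB0_def, hB1_def]
  have h00 : ∀ w : ℂ, (conj w * w).im = 0 := by
    intro w
    rw [mul_comm, Complex.mul_conj]
    exact Complex.ofReal_im _
  have h10 : (conj B1 * B0).im = -s₀ := by
    have : conj B1 * B0 = conj (conj B0 * B1) := by
      rw [map_mul, Complex.conj_conj]; ring
    rw [this, Complex.conj_im, hs0_def]
  refine ⟨s₀, ?_, ?_, ?_⟩
  · intro p q
    refine ⟨C.repr p 0 * C.repr q 1 - C.repr p 1 * C.repr q 0, ?_⟩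
    rw [hrepr p, hrepr q, im_lincomb, h00, h00, h10, hs0_def]
    push_cast
    ring
  · have hιBq : ∀ i, ιa (Bq i) = emb K ι (C i) := by
      intro i
      rw [hιa_apply, hBC i]
      rfl
    have hσBq : ∀ i, σa (Bq i) = conj (emb K ι (C i)) := by
      intro i
      rw [← hconj, hBC i]
      rfl
    have hform : ιa (Bq 0) * σa (Bq 1) - σa (Bq 0) * ιa (Bq 1)
        = -((conj B0 * B1) - conj (conj B0 * B1)) := by
      rw [hιBq, hσBq, hιBq, hσBq, ← hB0_def, ← hB1_def]
      simp only [map_mul, Complex.conj_conj]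
      ring
    have him : (conj B0 * B1).im = s₀ := rfl
    have : ((NumberField.discr K : ℝ) : ℂ) = ((-(4 * s₀ ^ 2) : ℝ) : ℂ) := by
      rw [hdisc_c, hform, Complex.sub_conj, him]
      push_cast
      rw [show ((2 : ℂ) * s₀ * I) = (2 * s₀) * I from by ring]
      rw [show (-((2:ℂ) * ↑s₀ * I))^2 = (2 * ↑s₀)^2 * (I^2) from by ring, Complex.I_sq]
      ring
    have hre := Complex.ofReal_inj.1 this
    linarith
  · -- Stickelberger for the quadratic field
    have hTZ : ∀ x : RingOfIntegers K, ∃ t : ℤ,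
        emb K ι x + conj (emb K ι x) = (t : ℂ) := by
      intro x
      have hint := RingOfIntegers.isIntegral_coe x
      have htrInt : IsIntegral ℤ (Algebra.trace ℚ K (algebraMap _ K x)) :=
        Algebra.isIntegral_trace hint
      obtain ⟨t, ht⟩ := IsIntegrallyClosed.isIntegral_iff.1 htrInt
      refine ⟨t, ?_⟩
      have : emb K ι x + conj (emb K ι x) = ιa (algebraMap _ K x) + σa (algebraMap _ K x) := by
        rw [show emb K ι x = ι (algebraMap (RingOfIntegers K) K x) from rfl, hconj, hιa_apply]
      rw [this, ← htr, ← ht]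
      push_cast
      norm_num
    have hNZ : ∀ x : RingOfIntegers K, ∃ n : ℤ,
        emb K ι x * conj (emb K ι x) = (n : ℂ) := by
      intro x
      have hint := RingOfIntegers.isIntegral_coe x
      have hnInt : IsIntegral ℤ (Algebra.norm ℚ (algebraMap _ K x)) :=
        Algebra.isIntegral_norm ℚ hint
      obtain ⟨n, hn⟩ := IsIntegrallyClosed.isIntegral_iff.1 hnInt
      refine ⟨n, ?_⟩
      have : emb K ι x * conj (emb K ι x) = ιa (algebraMap _ K x) * σa (algebraMap _ K x) := by
        rw [show emb K ι x = ι (algebraMap (RingOfIntegers K) K x) from rfl, hconj, hιa_apply]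
      rw [this, ← hnrm, ← hn]
      push_cast
      norm_num
    obtain ⟨t0, ht0⟩ := hTZ (C 0)
    obtain ⟨t1, ht1⟩ := hTZ (C 1)
    obtain ⟨t01, ht01⟩ := hTZ (C 0 * C 1)
    obtain ⟨n0, hn0⟩ := hNZ (C 0)
    obtain ⟨n1, hn1⟩ := hNZ (C 1)
    rw [hemb_mul, ← hB0_def, ← hB1_def] at ht01
    rw [← hB0_def] at ht0 hn0
    rw [← hB1_def] at ht1 hn1
    have hιBq : ∀ i, ιa (Bq i) = emb K ι (C i) := by
      intro i
      rw [hιa_apply, hBC i]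
      rfl
    have hσBq : ∀ i, σa (Bq i) = conj (emb K ι (C i)) := by
      intro i
      rw [← hconj, hBC i]
      rfl
    have hint : ((NumberField.discr K : ℤ) : ℂ)
        = (((t0 * t1 - t01) ^ 2 - 4 * (n0 * n1) : ℤ) : ℂ) := by
      have h1 : ((NumberField.discr K : ℤ) : ℂ) = ((NumberField.discr K : ℝ) : ℂ) := by
        push_cast; ring
      rw [h1, hdisc_c, hιBq, hσBq, hιBq, hσBq, ← hB0_def, ← hB1_def]
      have hc01 : conj (B0 * B1) = conj B0 * conj B1 := map_mul _ _ _
      rw [hc01] at ht01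
      push_cast
      rw [← ht0, ← ht1, ← ht01, ← hn0, ← hn1]
      ring
    have hZ : NumberField.discr K = (t0 * t1 - t01) ^ 2 - 4 * (n0 * n1) := by
      exact_mod_cast hint
    have hsq : ((t0 * t1 - t01) ^ 2) % 4 = 0 ∨ ((t0 * t1 - t01) ^ 2) % 4 = 1 := by
      rcases Int.even_or_odd (t0 * t1 - t01) with ⟨a, ha⟩ | ⟨a, ha⟩
      · left
        rw [ha, show (a + a) ^ 2 = 4 * a ^ 2 from by ring]
        exact Int.mul_emod_right 4 _
      · right
        rw [ha, show (2 * a + 1) ^ 2 = 1 + (a ^ 2 + a) * 4 from by ring,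
          Int.add_mul_emod_self_right]
        norm_num
    omega



lemma Esub (b d : ℂ) : conj b * d - b * conj d = ((2 * (conj b * d).im : ℝ)) * I := by
  have h := Complex.sub_conj (conj b * d)
  simpa [map_mul, Complex.conj_conj] using h

lemma tpart (t t' : ℂ) :
    t * conj t' + conj t * t'
      = 2 * (t.re : ℂ) * (t'.re : ℂ) + 2 * (t.im : ℂ) * (t'.im : ℂ) := by
  have h1 : conj (t * conj t') = conj t * t' := by
    rw [map_mul, Complex.conj_conj]
  have h2 := Complex.add_conj (t * conj t')
  rw [h1] at h2
  rw [h2, Complex.mul_re, Complex.conj_re, Complex.conj_im]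
  push_cast
  ring

/-- Real form of the determinant identity. -/
lemma I0_real {α β γ δ : ℂ} (hdet : α * δ - γ * β = 1) :
    (conj α * δ - β * conj γ).re ^ 2 + (conj α * δ - β * conj γ).im ^ 2 -
      4 * (conj β * δ).im * (conj α * γ).im = 1 := by
  have h : (conj α * δ - β * conj γ) * conj (conj α * δ - β * conj γ) +
      (conj β * δ - β * conj δ) * (conj α * γ - α * conj γ)
      = (α * δ - γ * β) * conj (α * δ - γ * β) := by
    simp only [map_sub, map_mul, Complex.conj_conj]
    ring
  rw [hdet, map_one, mul_one] at h
  rw [Complex.mul_conj, Esub β δ, Esub α γ] at h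
  set t := conj α * δ - β * conj γ
  set e := (conj β * δ).im
  set g := (conj α * γ).im
  push_cast at h
  have key : ((Complex.normSq t - 4 * e * g : ℝ) : ℂ) = ((1 : ℝ) : ℂ) := by
    push_cast
    linear_combination h - 4 * (e : ℂ) * (g : ℂ) * Complex.I_sq
  have := Complex.ofReal_inj.1 key
  rw [Complex.normSq_apply] at this
  nlinarith [this]

/-- Real form of the pairing. -/
lemma pairing_real (α β γ δ α' β' γ' δ' : ℂ) :
    (conj β * δ - β * conj δ) * (conj α' * γ' - α' * conj γ') +
      (conj β' * δ' - β' * conj δ') * (conj α * γ - α * conj γ) +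
      (conj α * δ - β * conj γ) * conj (conj α' * δ' - β' * conj γ') +
      conj (conj α * δ - β * conj γ) * (conj α' * δ' - β' * conj γ')
    = ((-4 * ((conj β * δ).im * (conj α' * γ').im + (conj β' * δ').im * (conj α * γ).im) +
        2 * ((conj α * δ - β * conj γ).re * (conj α' * δ' - β' * conj γ').re +
             (conj α * δ - β * conj γ).im * (conj α' * δ' - β' * conj γ').im) : ℝ) : ℂ) := by
  rw [Esub β δ, Esub α' γ', Esub β' δ', Esub α γ]
  push_cast
  linear_combination tpart (conj α * δ - β * conj γ) (conj α' * δ' - β' * conj γ') +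
    (4 * ((conj β * δ).im : ℂ) * ((conj α' * γ').im : ℂ) +
    4 * ((conj β' * δ').im : ℂ) * ((conj α * γ).im : ℂ)) * Complex.I_sq

/-- Integer endgame. -/
lemma int_endgame {D k m n1 n2 k' m' n1' n2' J : ℤ}
    (hC1 : 4 * k + D * k ^ 2 + m ^ 2 - 4 * n1 * n2 = 0)
    (hC2 : 4 * k' + D * k' ^ 2 + m' ^ 2 - 4 * n1' * n2' = 0)
    (hJ : J = 2 * (n1 * n2' + n1' * n2) - 2 * (k + k') - D * k * k' - m * m')
    (hmod : D % 4 = 0 ∨ D % 4 = 3) (hD3 : D ≠ 3) (hDpos : 0 < D)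
    (h1 : 0 < D * J) (h2 : D * J < 8) : False := by
  have hmder : ∀ a b n1 n2 : ℤ, 4 * a + D * a ^ 2 + b ^ 2 - 4 * n1 * n2 = 0 →
      (2 : ℤ) ∣ (b - D * a) := by
    intro a b x y hC
    have hc : ((b - D * a : ℤ) : ZMod 2) = 0 := by
      have c1 := congrArg (fun z : ℤ => (z : ZMod 2)) hC
      push_cast at c1 ⊢
      have h4 : (4 : ZMod 2) = 0 := by decide
      have hsq : ∀ x : ZMod 2, x ^ 2 = x := by decide
      have hneg : ∀ x : ZMod 2, -x = x := by decide
      rw [h4] at c1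
      rw [hsq, hsq] at c1
      have hb : (b : ZMod 2) = -((D : ZMod 2) * (a : ZMod 2)) := by linear_combination c1
      rw [hb, hneg]
      ring
    exact (ZMod.intCast_zmod_eq_zero_iff_dvd _ 2).1 hc
  obtain ⟨u, hu⟩ := hmder k m n1 n2 hC1
  obtain ⟨u', hu'⟩ := hmder k' m' n1' n2' hC2
  obtain ⟨v, hv⟩ := Int.even_mul_succ_self D
  have hu2 : m = D * k + 2 * u := by omega
  have hu2' : m' = D * k' + 2 * u' := by omega
  have hEvenJ : (2 : ℤ) ∣ J := by
    refine ⟨n1 * n2' + n1' * n2 - (k + k') - v * k * k' - D * k * u' - D * k' * u -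
      2 * u * u', ?_⟩
    rw [hJ, hu2, hu2']
    linear_combination (-(k * k')) * hv
  have hJpos : 0 < J := by
    rcases lt_trichotomy J 0 with h | h | h
    · nlinarith
    · rw [h, mul_zero] at h1
      exact absurd h1 (lt_irrefl 0)
    · exact h
  have hJ2 : 2 ≤ J := by omega
  have hD4 : 4 ≤ D := by omega
  nlinarith


end Stmt5Aux

set_option maxHeartbeats 3000000 in
/-- If `Δ ≠ −3` (i.e. `K ≠ ℚ(√−3)`), then two distinct `K`-Bianchi
circles have at most one common point in `ℂ ∪ {∞}`: they are disjoint or tangent. -/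
theorem stmt5 (K : Type) [Field K] [NumberField K]
    (hdeg : Module.finrank ℚ K = 2) (hdisc : NumberField.discr K < 0)
    (hne3 : NumberField.discr K ≠ -3)
    (ι : K →+* ℂ)
    (M M' : Matrix.SpecialLinearGroup (Fin 2) (RingOfIntegers K))
    (hne : bianchiCircle K ι M ≠ bianchiCircle K ι M') :
    Set.Subsingleton (bianchiCircle K ι M ∩ bianchiCircle K ι M') := by
  classical
  obtain ⟨s₀, hF, hs, hmod⟩ := Stmt5Aux.arith_data K hdeg hdisc ι
  set D : ℤ := -NumberField.discr K with hD_def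
  have hDpos : 0 < D := by omega
  have hD3 : D ≠ 3 := by omega
  have hmodD : D % 4 = 0 ∨ D % 4 = 3 := by omega
  have hD : 4 * s₀ ^ 2 = (D : ℝ) := by
    rw [hs, hD_def]
    push_cast
    ring
  have hDposR : (0 : ℝ) < (D : ℝ) := by exact_mod_cast hDpos
  have hs0pos : 0 < s₀ ^ 2 := by nlinarith
  have hs0sq : s₀ ^ 2 ≠ 0 := ne_of_gt hs0pos
  -- determinants
  have hdet : emb K ι (M.1 0 0) * emb K ι (M.1 1 1) -
      emb K ι (M.1 0 1) * emb K ι (M.1 1 0) = 1 := by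
    have h2 := M.2
    rw [Matrix.det_fin_two] at h2
    have h3 : ι (algebraMap (RingOfIntegers K) K
        (M.1 0 0 * M.1 1 1 - M.1 0 1 * M.1 1 0)) = 1 := by rw [h2, map_one, map_one]
    simpa only [emb, map_sub, map_mul] using h3
  have hdet' : emb K ι (M'.1 0 0) * emb K ι (M'.1 1 1) -
      emb K ι (M'.1 0 1) * emb K ι (M'.1 1 0) = 1 := by
    have h2 := M'.2
    rw [Matrix.det_fin_two] at h2
    have h3 : ι (algebraMap (RingOfIntegers K) K
        (M'.1 0 0 * M'.1 1 1 - M'.1 0 1 * M'.1 1 0)) = 1 := by rw [h2, map_one, map_one]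
    simpa only [emb, map_sub, map_mul] using h3
  intro w₁ hw₁ w₂ hw₂
  by_contra hww
  have hBx : Stmt5Aux.Bf (emb K ι (M.1 0 0)) (emb K ι (M.1 1 0)) (emb K ι (M.1 0 1))
      (emb K ι (M.1 1 1)) (Stmt5Aux.lift w₁) (Stmt5Aux.lift w₁) = 0 :=
    (Stmt5Aux.mem_mobius_iff hdet w₁).1 hw₁.1
  have hBy : Stmt5Aux.Bf (emb K ι (M.1 0 0)) (emb K ι (M.1 1 0)) (emb K ι (M.1 0 1))
      (emb K ι (M.1 1 1)) (Stmt5Aux.lift w₂) (Stmt5Aux.lift w₂) = 0 :=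
    (Stmt5Aux.mem_mobius_iff hdet w₂).1 hw₂.1
  have hBx' : Stmt5Aux.Bf (emb K ι (M'.1 0 0)) (emb K ι (M'.1 1 0)) (emb K ι (M'.1 0 1))
      (emb K ι (M'.1 1 1)) (Stmt5Aux.lift w₁) (Stmt5Aux.lift w₁) = 0 :=
    (Stmt5Aux.mem_mobius_iff hdet' w₁).1 hw₁.2
  have hBy' : Stmt5Aux.Bf (emb K ι (M'.1 0 0)) (emb K ι (M'.1 1 0)) (emb K ι (M'.1 0 1))
      (emb K ι (M'.1 1 1)) (Stmt5Aux.lift w₂) (Stmt5Aux.lift w₂) = 0 :=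
    (Stmt5Aux.mem_mobius_iff hdet' w₂).1 hw₂.2
  -- the lifted points are projectively independent
  have hdne : (Stmt5Aux.lift w₁).1 * (Stmt5Aux.lift w₂).2 -
      (Stmt5Aux.lift w₁).2 * (Stmt5Aux.lift w₂).1 ≠ 0 := by
    cases w₁ with
    | infty =>
      cases w₂ with
      | infty => exact absurd rfl hww
      | coe z =>
        simp only [Stmt5Aux.lift_infty, Stmt5Aux.lift_coe]
        norm_num
    | coe z =>
      cases w₂ with
      | infty =>
        simp only [Stmt5Aux.lift_infty, Stmt5Aux.lift_coe]
        norm_num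
      | coe z' =>
        simp only [Stmt5Aux.lift_coe, mul_one, one_mul]
        refine sub_ne_zero.mpr fun h => hww ?_
        rw [h]
  -- abbreviations
  generalize hαe : emb K ι (M.1 0 0) = α at hdet hBx hBy
  generalize hβe : emb K ι (M.1 1 0) = β at hdet hBx hBy
  generalize hγe : emb K ι (M.1 0 1) = γ at hdet hBx hBy
  generalize hδe : emb K ι (M.1 1 1) = δ at hdet hBx hBy
  generalize hαe' : emb K ι (M'.1 0 0) = α' at hdet' hBx' hBy'
  generalize hβe' : emb K ι (M'.1 1 0) = β' at hdet' hBx' hBy'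
  generalize hγe' : emb K ι (M'.1 0 1) = γ' at hdet' hBx' hBy'
  generalize hδe' : emb K ι (M'.1 1 1) = δ' at hdet' hBx' hBy'
  set x := Stmt5Aux.lift w₁ with hx_def
  set y := Stmt5Aux.lift w₂ with hy_def
  set d := x.1 * y.2 - x.2 * y.1 with hd_def
  have hddne : d * conj d ≠ 0 := mul_ne_zero hdne ((map_ne_zero (starRingEnd ℂ)).mpr hdne)
  set c := Stmt5Aux.Bf α β γ δ x y with hc_def
  set c' := Stmt5Aux.Bf α' β' γ' δ' x y with hc'_def
  clear_value x y d c c'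
  have hyx : Stmt5Aux.Bf α β γ δ y x = -conj c := by rw [hc_def, Stmt5Aux.Bf_swap]
  have hyx' : Stmt5Aux.Bf α' β' γ' δ' y x = -conj c' := by rw [hc'_def, Stmt5Aux.Bf_swap]
  have hcc : c * conj c = d * conj d := by
    have h := Stmt5Aux.I1 α β γ δ x y
    rw [hBx, hBy, hyx, ← hc_def, ← hd_def, hdet, map_one] at h
    linear_combination h
  have hcc' : c' * conj c' = d * conj d := by
    have h := Stmt5Aux.I1 α' β' γ' δ' x y
    rw [hBx', hBy', hyx', ← hc'_def, ← hd_def, hdet', map_one] at h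
    linear_combination h
  by_cases hpm : c' = c ∨ c' = -c
  · -- the two circles coincide: contradiction with `hne`
    refine hne ?_
    have hiff : ∀ u : ℂ × ℂ,
        Stmt5Aux.Bf α β γ δ u u = 0 ↔ Stmt5Aux.Bf α' β' γ' δ' u u = 0 := by
      intro u
      have h3 := Stmt5Aux.I3 α β γ δ x y u
      have h3' := Stmt5Aux.I3 α' β' γ' δ' x y u
      rw [hBx, hBy, hyx, ← hc_def, ← hd_def] at h3
      rw [hBx', hBy', hyx', ← hc'_def, ← hd_def] at h3'
      have hBu : Stmt5Aux.Bf α' β' γ' δ' u u = Stmt5Aux.Bf α β γ δ u u ∨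
          Stmt5Aux.Bf α' β' γ' δ' u u = -Stmt5Aux.Bf α β γ δ u u := by
        rcases hpm with h | h
        · left
          apply mul_left_cancel₀ hddne
          rw [h] at h3'
          rw [h3, h3']
        · right
          apply mul_left_cancel₀ hddne
          rw [h] at h3'
          rw [h3']
          simp only [map_neg]
          linear_combination h3
      rcases hBu with h | h
      · rw [h]
      · rw [h, neg_eq_zero]
    ext w
    rw [show (w ∈ bianchiCircle K ι M) ↔ Stmt5Aux.Bf (emb K ι (M.1 0 0)) (emb K ι (M.1 1 0))
        (emb K ι (M.1 0 1)) (emb K ι (M.1 1 1)) (Stmt5Aux.lift w) (Stmt5Aux.lift w) = 0 from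
        Stmt5Aux.mem_mobius_iff (by rw [hαe, hβe, hγe, hδe]; exact hdet) w,
      show (w ∈ bianchiCircle K ι M') ↔ Stmt5Aux.Bf (emb K ι (M'.1 0 0)) (emb K ι (M'.1 1 0))
        (emb K ι (M'.1 0 1)) (emb K ι (M'.1 1 1)) (Stmt5Aux.lift w) (Stmt5Aux.lift w) = 0 from
        Stmt5Aux.mem_mobius_iff (by rw [hαe', hβe', hγe', hδe']; exact hdet') w,
      hαe, hβe, hγe, hδe, hαe', hβe', hγe', hδe']
    exact hiff (Stmt5Aux.lift w)
  · -- transversal intersection: arithmetic contradiction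
    push_neg at hpm
    obtain ⟨hpc1, hpnc⟩ := hpm
    have hI2 := Stmt5Aux.I2 α β γ δ α' β' γ' δ' x y
    rw [hBx, hBy, hBx', hBy', hyx, hyx', ← hc_def, ← hc'_def, ← hd_def,
      Stmt5Aux.pairing_real] at hI2
    set r : ℝ := -4 * ((conj β * δ).im * (conj α' * γ').im +
        (conj β' * δ').im * (conj α * γ).im) +
      2 * ((conj α * δ - β * conj γ).re * (conj α' * δ' - β' * conj γ').re +
        (conj α * δ - β * conj γ).im * (conj α' * δ' - β' * conj γ').im) with hr_def
  -- real equations from the two common points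
    have hplusC : ((r * Complex.normSq d : ℝ) : ℂ)
        = ((Complex.normSq (c + c') - 2 * Complex.normSq d : ℝ) : ℂ) := by
      push_cast
      rw [show ((Complex.normSq d : ℝ) : ℂ) = d * conj d from (Complex.mul_conj d).symm,
        show ((Complex.normSq (c + c') : ℝ) : ℂ) = (c + c') * conj (c + c') from
          (Complex.mul_conj _).symm]
      simp only [map_add]
      linear_combination -hI2 - hcc - hcc'
    have hminusC : ((r * Complex.normSq d : ℝ) : ℂ)
        = ((2 * Complex.normSq d - Complex.normSq (c - c') : ℝ) : ℂ) := by
      push_cast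
      rw [show ((Complex.normSq d : ℝ) : ℂ) = d * conj d from (Complex.mul_conj d).symm,
        show ((Complex.normSq (c - c') : ℝ) : ℂ) = (c - c') * conj (c - c') from
          (Complex.mul_conj _).symm]
      simp only [map_sub]
      linear_combination -hI2 + hcc + hcc'
    have hplus := Complex.ofReal_inj.1 hplusC
    have hminus := Complex.ofReal_inj.1 hminusC
    have hdpos : 0 < Complex.normSq d := Complex.normSq_pos.mpr hdne
    have haddne : c + c' ≠ 0 := by
      intro h
      exact hpnc (by linear_combination h)
    have hsubne : c - c' ≠ 0 := sub_ne_zero.mpr (Ne.symm hpc1)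
    have haddpos : 0 < Complex.normSq (c + c') := Complex.normSq_pos.mpr haddne
    have hsubpos : 0 < Complex.normSq (c - c') := Complex.normSq_pos.mpr hsubne
    have hrlt : r * Complex.normSq d < 2 * Complex.normSq d := by nlinarith
    have hrgt : -2 * Complex.normSq d < r * Complex.normSq d := by nlinarith
    have hrlt2 : r < 2 := by nlinarith
    have hrgt2 : -2 < r := by nlinarith
    -- integral data for both circles
    have hone : emb K ι (1 : RingOfIntegers K) = 1 := by simp [emb, map_one]
    obtain ⟨n1, hn1⟩ := hF (M.1 1 0) (M.1 1 1)
    obtain ⟨n2, hn2⟩ := hF (M.1 0 0) (M.1 0 1)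
    obtain ⟨mad, hmad⟩ := hF (M.1 0 0) (M.1 1 1)
    obtain ⟨mbc, hmbc⟩ := hF (M.1 1 0) (M.1 0 1)
    obtain ⟨pa, hpa⟩ := hF 1 (M.1 0 0)
    obtain ⟨pb, hpb⟩ := hF 1 (M.1 1 0)
    obtain ⟨pc, hpc⟩ := hF 1 (M.1 0 1)
    obtain ⟨pd, hpd⟩ := hF 1 (M.1 1 1)
    obtain ⟨n1', hn1'⟩ := hF (M'.1 1 0) (M'.1 1 1)
    obtain ⟨n2', hn2'⟩ := hF (M'.1 0 0) (M'.1 0 1)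
    obtain ⟨mad', hmad'⟩ := hF (M'.1 0 0) (M'.1 1 1)
    obtain ⟨mbc', hmbc'⟩ := hF (M'.1 1 0) (M'.1 0 1)
    obtain ⟨pa', hpa'⟩ := hF 1 (M'.1 0 0)
    obtain ⟨pb', hpb'⟩ := hF 1 (M'.1 1 0)
    obtain ⟨pc', hpc'⟩ := hF 1 (M'.1 0 1)
    obtain ⟨pd', hpd'⟩ := hF 1 (M'.1 1 1)
    rw [hone, map_one, one_mul, hαe] at hpa
    rw [hone, map_one, one_mul, hβe] at hpb
    rw [hone, map_one, one_mul, hγe] at hpc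
    rw [hone, map_one, one_mul, hδe] at hpd
    rw [hone, map_one, one_mul, hαe'] at hpa'
    rw [hone, map_one, one_mul, hβe'] at hpb'
    rw [hone, map_one, one_mul, hγe'] at hpc'
    rw [hone, map_one, one_mul, hδe'] at hpd'
    rw [hβe, hδe] at hn1
    rw [hαe, hγe] at hn2
    rw [hαe, hδe] at hmad
    rw [hβe, hγe] at hmbc
    rw [hβe', hδe'] at hn1'
    rw [hαe', hγe'] at hn2'
    rw [hαe', hδe'] at hmad'
    rw [hβe', hγe'] at hmbc'
    -- components of t and t'
    have hswap : ∀ u v : ℂ, (u * conj v).im = -(conj u * v).im := by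
      intro u v
      rw [show u * conj v = conj (conj u * v) by rw [map_mul, Complex.conj_conj],
        Complex.conj_im]
    have htim : (conj α * δ - β * conj γ).im = ((mad + mbc : ℤ) : ℝ) * s₀ := by
      rw [Complex.sub_im, hswap β γ, hmad, hmbc]
      push_cast
      ring
    have htim' : (conj α' * δ' - β' * conj γ').im = ((mad' + mbc' : ℤ) : ℝ) * s₀ := by
      rw [Complex.sub_im, hswap β' γ', hmad', hmbc']
      push_cast
      ring
    have htre : (conj α * δ - β * conj γ).re = 1 + 2 * ((pa * pd - pb * pc : ℤ) : ℝ) * s₀ ^ 2 := by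
      have hre := congrArg Complex.re hdet
      simp only [Complex.sub_re, Complex.mul_re, Complex.one_re] at hre
      simp only [Complex.sub_re, Complex.mul_re, Complex.conj_re, Complex.conj_im]
      push_cast
      linear_combination hre + 2 * δ.im * hpa + 2 * (pa : ℝ) * s₀ * hpd -
        2 * γ.im * hpb - 2 * (pb : ℝ) * s₀ * hpc
    have htre' : (conj α' * δ' - β' * conj γ').re
        = 1 + 2 * ((pa' * pd' - pb' * pc' : ℤ) : ℝ) * s₀ ^ 2 := by
      have hre := congrArg Complex.re hdet'
      simp only [Complex.sub_re, Complex.mul_re, Complex.one_re] at hre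
      simp only [Complex.sub_re, Complex.mul_re, Complex.conj_re, Complex.conj_im]
      push_cast
      linear_combination hre + 2 * δ'.im * hpa' + 2 * (pa' : ℝ) * s₀ * hpd' -
        2 * γ'.im * hpb' - 2 * (pb' : ℝ) * s₀ * hpc'
    -- per-circle integer equations
    have hC1 : 4 * (pa * pd - pb * pc) + D * (pa * pd - pb * pc) ^ 2 +
        (mad + mbc) ^ 2 - 4 * n1 * n2 = 0 := by
      have hI0 := Stmt5Aux.I0_real hdet
      rw [htre, htim, hn1, hn2] at hI0
      push_cast at hI0
      have hz : s₀ ^ 2 * ((4 * (pa * pd - pb * pc) + D * (pa * pd - pb * pc) ^ 2 +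
          (mad + mbc) ^ 2 - 4 * n1 * n2 : ℤ) : ℝ) = 0 := by
        push_cast
        linear_combination hI0 - ((pa : ℝ) * pd - (pb : ℝ) * pc) ^ 2 * s₀ ^ 2 * hD
      rcases mul_eq_zero.1 hz with h | h
      · exact absurd h hs0sq
      · exact_mod_cast h
    have hC2 : 4 * (pa' * pd' - pb' * pc') + D * (pa' * pd' - pb' * pc') ^ 2 +
        (mad' + mbc') ^ 2 - 4 * n1' * n2' = 0 := by
      have hI0 := Stmt5Aux.I0_real hdet'
      rw [htre', htim', hn1', hn2'] at hI0
      push_cast at hI0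
      have hz : s₀ ^ 2 * ((4 * (pa' * pd' - pb' * pc') + D * (pa' * pd' - pb' * pc') ^ 2 +
          (mad' + mbc') ^ 2 - 4 * n1' * n2' : ℤ) : ℝ) = 0 := by
        push_cast
        linear_combination hI0 - ((pa' : ℝ) * pd' - (pb' : ℝ) * pc') ^ 2 * s₀ ^ 2 * hD
      rcases mul_eq_zero.1 hz with h | h
      · exact absurd h hs0sq
      · exact_mod_cast h
    -- the pairing quantity in integer terms
    obtain ⟨J, hJ_def⟩ : ∃ J : ℤ, J = 2 * (n1 * n2' + n1' * n2) -
        2 * ((pa * pd - pb * pc) + (pa' * pd' - pb' * pc')) -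
        D * (pa * pd - pb * pc) * (pa' * pd' - pb' * pc') -
        (mad + mbc) * (mad' + mbc') := ⟨_, rfl⟩
    have hrJ : r = 2 - 2 * s₀ ^ 2 * (J : ℝ) := by
      rw [hJ_def, hr_def, htre, htim, htre', htim', hn1, hn2, hn1', hn2']
      push_cast
      linear_combination (2 * ((pa : ℝ) * pd - (pb : ℝ) * pc) *
        ((pa' : ℝ) * pd' - (pb' : ℝ) * pc') * s₀ ^ 2) * hD
    have h1R : (0 : ℝ) < (D : ℝ) * (J : ℝ) := by nlinarith
    have h2R : (D : ℝ) * (J : ℝ) < 8 := by nlinarith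
    have h1Z : 0 < D * J := by exact_mod_cast h1R
    have h2Z : D * J < 8 := by exact_mod_cast h2R
    exact Stmt5Aux.int_endgame hC1 hC2 hJ_def hmodD hD3 hDpos h1Z h2Z
end

section
/- Let α, β ∈ O_K be coprime (αO_K + βO_K = O_K) and fix γ₀, δ₀ ∈ O_K with αδ₀ − βγ₀ = 1. Let F be the set of all M ∈ SL₂(O_K) whose first column is (α, β)ᵀ. Then: (1) the set of curvatures {b(M) : M ∈ F} equals {i(βδ̄₀ − β̄δ₀) + k·√(−Δ)·N(β) : k ∈ ℤ}, i.e. it is a full congruence class modulo √(−Δ)·N(β); and (2) if β ≠ 0, there is a single real line in ℂ passing through α/β which contains the centres a(M)/b(M) of all M ∈ F with b(M) ≠ 0. -/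
open Complex ComplexConjugate NumberField OnePoint

/-- The curvature `i(βδ̄−β̄δ)` of the oriented circle `M(ℝ̂)` for `M = [[α,γ],[β,δ]]`. -/
noncomputable def curv (β δ : ℂ) : ℂ := Complex.I * (β * conj δ - conj β * δ)

/-- The curvature-centre `i(αδ̄−γβ̄)` of the oriented circle `M(ℝ̂)` for `M = [[α,γ],[β,δ]]`. -/
noncomputable def curvCenter (α β γ δ : ℂ) : ℂ := Complex.I * (α * conj δ - γ * conj β)

/-- The curvature of the `K`-Bianchi circle attached to `M ∈ SL₂(O_K)`. -/
noncomputable def curvM (K : Type) [Field K] [NumberField K] (ι : K →+* ℂ)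
    (M : Matrix.SpecialLinearGroup (Fin 2) (RingOfIntegers K)) : ℂ :=
  curv (emb K ι (M.1 1 0)) (emb K ι (M.1 1 1))

/-- The curvature-centre of the `K`-Bianchi circle attached to `M ∈ SL₂(O_K)`. -/
noncomputable def curvCenterM (K : Type) [Field K] [NumberField K] (ι : K →+* ℂ)
    (M : Matrix.SpecialLinearGroup (Fin 2) (RingOfIntegers K)) : ℂ :=
  curvCenter (emb K ι (M.1 0 0)) (emb K ι (M.1 1 0)) (emb K ι (M.1 0 1)) (emb K ι (M.1 1 1))

section Aux

open Matrix

lemma emb_hom (K : Type) [Field K] [NumberField K] (ι : K →+* ℂ) :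
    emb K ι = ⇑(ι.comp (algebraMap (RingOfIntegers K) K)) := rfl

lemma conj_sub_sq (z : ℂ) : ((starRingEnd ℂ) z - z)^2 = ((-(2*z.im)^2 : ℝ) : ℂ) := by
  simp [Complex.ext_iff, pow_two, Complex.mul_re, Complex.mul_im]
  ring

lemma allreal_false (K : Type) [Field K] [NumberField K]
    (hdeg : Module.finrank ℚ K = 2) (hdisc : NumberField.discr K < 0)
    (hall : ∀ σ : K →ₐ[ℚ] ℂ, ∀ x, (starRingEnd ℂ) (σ x) = σ x) : False := by
  have hAcard : Fintype.card (K →ₐ[ℚ] ℂ) = 2 := by rw [AlgHom.card, hdeg]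
  have hcard : Fintype.card (Module.Free.ChooseBasisIndex ℤ (RingOfIntegers K)) = 2 := by
    rw [← Module.finrank_eq_card_chooseBasisIndex, RingOfIntegers.rank, hdeg]
  let eidx := Fintype.equivFinOfCardEq hcard
  let c : Module.Basis (Fin 2) ℚ K := (integralBasis K).reindex eidx
  have hdiscc : Algebra.discr ℚ ⇑c = (NumberField.discr K : ℚ) := by
    rw [coe_discr, Module.Basis.coe_reindex, Algebra.discr_reindex]
  let e : Fin 2 ≃ (K →ₐ[ℚ] ℂ) := (Fintype.equivFinOfCardEq hAcard).symm
  have h1 := Algebra.discr_eq_det_embeddingsMatrixReindex_pow_two ℚ ℂ ⇑c e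
  set d := (Algebra.embeddingsMatrixReindex ℚ ℂ ⇑c e).det with hd
  have hdconj : (starRingEnd ℂ) d = d := by
    rw [hd, RingHom.map_det]
    congr 1
    ext i j
    simp [Algebra.embeddingsMatrixReindex, Algebra.embeddingsMatrix, hall]
  have him : d.im = 0 := Complex.conj_eq_iff_im.mp hdconj
  rw [hdiscc] at h1
  have h2 : ((NumberField.discr K : ℝ) : ℂ) = d ^ 2 := by
    rw [← h1]; simp [algebraMap]
  have h3 : (NumberField.discr K : ℝ) = d.re ^ 2 := by
    have := congrArg Complex.re h2
    simpa [pow_two, Complex.mul_re, him] using this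
  have h4 : (NumberField.discr K : ℝ) < 0 := by exact_mod_cast hdisc
  nlinarith [sq_nonneg d.re]

lemma key (K : Type) [Field K] [NumberField K]
    (hdeg : Module.finrank ℚ K = 2) (hdisc : NumberField.discr K < 0) (ι : K →+* ℂ) :
    ∃ ω : RingOfIntegers K,
      2 * (emb K ι ω).im = Real.sqrt (-(NumberField.discr K : ℝ)) ∧
      ∀ m : RingOfIntegers K, ∃ k : ℤ,
        2 * (emb K ι m).im = (k : ℝ) * Real.sqrt (-(NumberField.discr K : ℝ)) := by
  classical
  have hAcard : Fintype.card (K →ₐ[ℚ] ℂ) = 2 := by rw [AlgHom.card, hdeg]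
  -- conjugation on AlgHoms
  let cj : (K →ₐ[ℚ] ℂ) → (K →ₐ[ℚ] ℂ) := fun σ => ((starRingEnd ℂ).comp σ.toRingHom).toRatAlgHom
  have hcj_apply : ∀ σ x, cj σ x = (starRingEnd ℂ) (σ x) := fun σ x => rfl
  let σ₀ : K →ₐ[ℚ] ℂ := ι.toRatAlgHom
  have hσ₀ : ∀ x, σ₀ x = ι x := fun x => rfl
  -- there is a non-real value of ι
  have hnotreal : ∃ x₀ : K, (starRingEnd ℂ) (ι x₀) ≠ ι x₀ := by
    by_contra hc
    push_neg at hc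
    refine allreal_false K hdeg hdisc ?_
    intro σ x
    by_contra hσx
    have hσ : cj σ ≠ σ := fun h => hσx (by rw [← hcj_apply, h])
    have hσσ₀ : σ ≠ σ₀ := by
      rintro rfl
      exact hσ (AlgHom.ext fun y => hc y)
    have hcjσσ₀ : cj σ ≠ σ₀ := by
      intro h
      have h2 : cj (cj σ) = σ := AlgHom.ext fun y => by simp [hcj_apply]
      have h3 : cj σ₀ = σ₀ := AlgHom.ext fun y => hc y
      exact hσσ₀ (by rw [← h2, h, h3])
    have : ({σ₀, σ, cj σ} : Finset (K →ₐ[ℚ] ℂ)).card ≤ 2 := hAcard ▸ Finset.card_le_univ _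
    rw [Finset.card_insert_of_notMem (by simp [hσσ₀.symm, hcjσσ₀.symm]),
      Finset.card_insert_of_notMem (by simp [hσ.symm]), Finset.card_singleton] at this
    omega
  obtain ⟨x₀, hx₀⟩ := hnotreal
  let σ₁ : K →ₐ[ℚ] ℂ := ((starRingEnd ℂ).comp ι).toRatAlgHom
  have hσ₁ : ∀ x, σ₁ x = (starRingEnd ℂ) (ι x) := fun x => rfl
  have hσne : σ₀ ≠ σ₁ := by
    intro h
    exact hx₀ (by rw [← hσ₁, ← h, hσ₀])
  -- the equiv Fin 2 ≃ AlgHoms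
  let f : Fin 2 → (K →ₐ[ℚ] ℂ) := ![σ₀, σ₁]
  have hfinj : Function.Injective f := by
    intro i j hij
    fin_cases i <;> fin_cases j <;> simp_all [f] <;> exact hσne (by simpa using hij)
  have hfbij : Function.Bijective f :=
    (Fintype.bijective_iff_injective_and_card f).mpr ⟨hfinj, by simp [hAcard]⟩
  let e : Fin 2 ≃ (K →ₐ[ℚ] ℂ) := Equiv.ofBijective f hfbij
  have he0 : e 0 = σ₀ := rfl
  have he1 : e 1 = σ₁ := rfl
  -- integral basis
  have hcard : Fintype.card (Module.Free.ChooseBasisIndex ℤ (RingOfIntegers K)) = 2 := by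
    rw [← Module.finrank_eq_card_chooseBasisIndex, RingOfIntegers.rank, hdeg]
  let eidx := Fintype.equivFinOfCardEq hcard
  let b : Module.Basis (Fin 2) ℤ (RingOfIntegers K) := (RingOfIntegers.basis K).reindex eidx
  let c : Module.Basis (Fin 2) ℚ K := (integralBasis K).reindex eidx
  have hcb : ∀ i, c i = algebraMap (RingOfIntegers K) K (b i) := by
    intro i
    simp [c, b, integralBasis_apply]
  have hdiscc : Algebra.discr ℚ ⇑c = (NumberField.discr K : ℚ) := by
    rw [coe_discr, Module.Basis.coe_reindex, Algebra.discr_reindex]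
  set p : ℤ := b.repr 1 0 with hp
  set q : ℤ := b.repr 1 1 with hq
  have h1 : (1 : RingOfIntegers K) = p • b 0 + q • b 1 := by
    have := b.sum_repr 1
    rw [Fin.sum_univ_two] at this
    exact this.symm
  -- gcd p q = 1
  have hgcd : Int.gcd p q = 1 := by
    set g : ℤ := (Int.gcd p q : ℤ) with hg
    have hgnz : g ≠ 0 := by
      rw [hg]
      simp only [ne_eq, Int.natCast_eq_zero, Int.gcd_eq_zero_iff, not_and]
      rintro h0 h0'
      rw [h0, h0'] at h1
      simp at h1
    obtain ⟨p', hp'⟩ : g ∣ p := Int.gcd_dvd_left p q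
    obtain ⟨q', hq'⟩ : g ∣ q := Int.gcd_dvd_right p q
    set x : RingOfIntegers K := p' • b 0 + q' • b 1 with hx
    have hgx : g • x = 1 := by
      rw [h1, hx, smul_add, smul_smul, smul_smul, ← hp', ← hq']
    have hgxK : (g : K) * algebraMap (RingOfIntegers K) K x = 1 := by
      have := congrArg (algebraMap (RingOfIntegers K) K) hgx
      rw [map_zsmul, _root_.map_one] at this
      rw [← this, zsmul_eq_mul]
    have hgK : (g : K) ≠ 0 := Int.cast_ne_zero.mpr hgnz
    have hxK : algebraMap (RingOfIntegers K) K x = algebraMap ℚ K ((g : ℚ)⁻¹) := by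
      have h2 : algebraMap ℚ K ((g : ℚ)⁻¹) = (g : K)⁻¹ := by
        rw [map_inv₀]; norm_num
      rw [h2]
      exact eq_inv_of_mul_eq_one_right (by linear_combination hgxK)
    have hint : IsIntegral ℤ ((g : ℚ)⁻¹) := by
      have h := RingOfIntegers.isIntegral_coe x
      rw [hxK] at h
      exact (isIntegral_algebraMap_iff (algebraMap ℚ K).injective).mp h
    obtain ⟨n, hn⟩ := IsIntegrallyClosed.isIntegral_iff.mp hint
    have hgn : g * n = 1 := by
      have : (g : ℚ) * (n : ℚ) = 1 := by
        rw [show ((n : ℤ) : ℚ) = algebraMap ℤ ℚ n from rfl, hn]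
        field_simp
      exact_mod_cast this
    have h5 : g = 1 ∨ g = -1 := Int.isUnit_iff.mp (IsUnit.of_mul_eq_one _ hgn)
    have : (0 : ℤ) ≤ g := by positivity
    omega
  obtain ⟨u, v, huv⟩ := Int.isCoprime_iff_gcd_eq_one.mpr hgcd
  -- the imaginary parts of the basis images
  set w0 : ℂ := emb K ι (b 0) with hw0
  set w1 : ℂ := emb K ι (b 1) with hw1
  have hembcomb : ∀ (a a' : ℤ), emb K ι (a • b 0 + a' • b 1) = (a : ℂ) * w0 + (a' : ℂ) * w1 := by
    intro a a'
    rw [hw0, hw1, emb_hom]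
    rw [_root_.map_add, map_zsmul, map_zsmul, zsmul_eq_mul, zsmul_eq_mul]
  have hlin : p * w0.im + q * w1.im = 0 := by
    have h3 : (p : ℂ) * w0 + (q : ℂ) * w1 = 1 := by
      rw [← hembcomb, ← h1, emb_hom, _root_.map_one]
    simpa using congrArg Complex.im h3
  -- helper: from integers r s with p*s - q*r = ε (ε = ±1) we get the discr value
  -- discriminant computation for ω := r • b 0 + s • b 1 with p*s-q*r = 1
  have hdisc_omega : ∀ r s : ℤ, p * s - q * r = 1 →
      (NumberField.discr K : ℝ) =
        -(2 * (emb K ι (r • b 0 + s • b 1)).im) ^ 2 := by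
    intro r s hrs
    set ω : RingOfIntegers K := r • b 0 + s • b 1 with hω
    set ωK : K := algebraMap (RingOfIntegers K) K ω with hωK
    set z : ℂ := emb K ι ω with hz
    have hzι : ι ωK = z := rfl
    have h1K : (1 : K) = (p : K) * c 0 + (q : K) * c 1 := by
      have := congrArg (algebraMap (RingOfIntegers K) K) h1
      rw [_root_.map_one, _root_.map_add, map_zsmul, map_zsmul, zsmul_eq_mul, zsmul_eq_mul] at this
      rw [this, hcb 0, hcb 1]
    have hωKc : ωK = (r : K) * c 0 + (s : K) * c 1 := by
      rw [hωK, hω, _root_.map_add, map_zsmul, map_zsmul, zsmul_eq_mul, zsmul_eq_mul,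
        hcb 0, hcb 1]
    set P : Matrix (Fin 2) (Fin 2) ℚ := !![(p : ℚ), (r : ℚ); (q : ℚ), (s : ℚ)] with hP
    have hvecmul : (⇑c ᵥ* P.map (algebraMap ℚ K)) = ![1, ωK] := by
      funext j
      fin_cases j <;>
        simp [Matrix.vecMul, dotProduct, Fin.sum_univ_two, hP, map_intCast] <;>
        [linear_combination h1K.symm; linear_combination hωKc.symm]
    have hdetP : P.det = 1 := by
      rw [hP, Matrix.det_fin_two_of]
      have h' : p * s - r * q = 1 := by linarith
      exact_mod_cast h'
    have hdiscv := Algebra.discr_of_matrix_vecMul (A := ℚ) ⇑c P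
    rw [hvecmul, hdetP, hdiscc, one_pow, one_mul] at hdiscv
    have h2 := Algebra.discr_eq_det_embeddingsMatrixReindex_pow_two ℚ ℂ ![(1 : K), ωK] e
    rw [hdiscv] at h2
    have hM : (Algebra.embeddingsMatrixReindex ℚ ℂ ![(1 : K), ωK] e).det
        = (starRingEnd ℂ) z - z := by
      rw [Matrix.det_fin_two]
      have hMij : ∀ (i j : Fin 2),
          Algebra.embeddingsMatrixReindex ℚ ℂ ![(1 : K), ωK] e i j
            = e j (![(1 : K), ωK] i) := by
        intro i j
        simp [Algebra.embeddingsMatrixReindex, Algebra.embeddingsMatrix]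
      rw [hMij, hMij, hMij, hMij, he0, he1]
      simp only [Matrix.cons_val_zero, Matrix.cons_val_one, Matrix.head_cons, _root_.map_one]
      rw [show σ₀ ωK = z from rfl, show σ₁ ωK = (starRingEnd ℂ) z from rfl]
      ring
    rw [hM] at h2
    have h3 : ((NumberField.discr K : ℝ) : ℂ) = ((-(2 * z.im) ^ 2 : ℝ) : ℂ) := by
      rw [show ((NumberField.discr K : ℝ) : ℂ)
          = algebraMap ℚ ℂ ((NumberField.discr K : ℚ)) by simp [algebraMap], h2]
      exact conj_sub_sq z
    exact_mod_cast congrArg Complex.re h3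
  set r : ℤ := -v with hr
  set s : ℤ := u with hs
  have hrs : p * s - q * r = 1 := by rw [hr, hs]; linarith
  have hrsR : (p : ℝ) * s - q * r = 1 := by exact_mod_cast hrs
  have hzim : (emb K ι (r • b 0 + s • b 1)).im = r * w0.im + s * w1.im := by
    rw [hembcomb]; simp
  have hd1 := hdisc_omega r s hrs
  rw [hzim] at hd1
  set T : ℝ := 2 * ((r : ℝ) * w0.im + (s : ℝ) * w1.im) with hT
  have hsq : Real.sqrt (-(NumberField.discr K : ℝ)) = |T| := by
    rw [show -(NumberField.discr K : ℝ) = T ^ 2 by linarith [hd1],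
      Real.sqrt_sq_eq_abs]
  have hmain : ∀ m : RingOfIntegers K, 2 * (emb K ι m).im
      = ((-q * (b.repr m 0) + p * (b.repr m 1) : ℤ) : ℝ) * T := by
    intro m
    have hmrep : m = (b.repr m 0 : ℤ) • b 0 + (b.repr m 1 : ℤ) • b 1 := by
      have := b.sum_repr m
      rw [Fin.sum_univ_two] at this
      exact this.symm
    set c₀ : ℤ := b.repr m 0
    set c₁ : ℤ := b.repr m 1
    have h2 : (emb K ι m).im = c₀ * w0.im + c₁ * w1.im := by
      conv_lhs => rw [hmrep]
      rw [hembcomb]; simp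
    rw [h2, hT]
    push_cast
    linear_combination (2 * ((s : ℝ) * c₀ - r * c₁)) * hlin
      - (2 * ((c₀ : ℝ) * w0.im + c₁ * w1.im)) * hrsR
  rcases le_or_gt 0 T with hTpos | hTneg
  · refine ⟨r • b 0 + s • b 1, ?_, ?_⟩
    · rw [hzim, hsq, _root_.abs_of_nonneg hTpos, hT]
    · intro m
      exact ⟨-q * b.repr m 0 + p * b.repr m 1,
        by rw [hmain m, hsq, _root_.abs_of_nonneg hTpos]⟩
  · refine ⟨(-r) • b 0 + (-s) • b 1, ?_, ?_⟩
    · have h2 : (emb K ι ((-r) • b 0 + (-s) • b 1)).im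
          = (-r : ℝ) * w0.im + (-s : ℝ) * w1.im := by
        rw [hembcomb]; push_cast; simp
      rw [h2, hsq, _root_.abs_of_neg hTneg, hT]
      push_cast
      ring
    · intro m
      refine ⟨-(-q * b.repr m 0 + p * b.repr m 1), ?_⟩
      rw [hmain m, hsq, _root_.abs_of_neg hTneg]
      push_cast
      ring

lemma I_mul_conj_sub (w : ℂ) : Complex.I * ((starRingEnd ℂ) w - w) = ((2 * w.im : ℝ) : ℂ) := by
  apply Complex.ext <;> simp <;> ring

lemma curv_expand (B D W : ℂ) :
    curv B (D + B * W) = curv B D + (B * conj B) * ((2 * W.im : ℝ) : ℂ) := by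
  rw [← I_mul_conj_sub W]
  simp only [curv, _root_.map_add, _root_.map_mul]
  ring

end Aux

/-- Let `α, β ∈ O_K` be coprime and `αδ₀ − βγ₀ = 1`. Among all
`M ∈ SL₂(O_K)` with first column `(α,β)ᵀ`: (1) the set of curvatures is exactly the
congruence class `{i(βδ̄₀−β̄δ₀) + k√(−Δ)N(β) : k ∈ ℤ}` modulo `√(−Δ)N(β)`; and (2) if
`β ≠ 0`, a single real line through `α/β` contains the centres `a(M)/b(M)` of all such
circles with `b(M) ≠ 0`. -/
theorem stmt6 (K : Type) [Field K] [NumberField K]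
    (hdeg : Module.finrank ℚ K = 2) (hdisc : NumberField.discr K < 0)
    (ι : K →+* ℂ)
    (α β γ₀ δ₀ : RingOfIntegers K)
    (hcop : IsCoprime α β) (hdet : α * δ₀ - β * γ₀ = 1) :
    ({z : ℂ | ∃ M : Matrix.SpecialLinearGroup (Fin 2) (RingOfIntegers K),
        M.1 0 0 = α ∧ M.1 1 0 = β ∧ z = curvM K ι M}
      = {z : ℂ | ∃ k : ℤ,
          z = curv (emb K ι β) (emb K ι δ₀)
            + (k : ℂ) * (Real.sqrt (-(NumberField.discr K : ℝ)) : ℂ)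
              * (emb K ι β * conj (emb K ι β))})
    ∧ (β ≠ 0 → ∃ w v : ℂ, v ≠ 0 ∧
        (∃ t : ℝ, emb K ι α / emb K ι β = w + (t : ℂ) * v) ∧
        ∀ M : Matrix.SpecialLinearGroup (Fin 2) (RingOfIntegers K),
          M.1 0 0 = α → M.1 1 0 = β → curvM K ι M ≠ 0 →
            ∃ t : ℝ, curvCenterM K ι M / curvM K ι M = w + (t : ℂ) * v) := by
  obtain ⟨ω, hω, hωall⟩ := key K hdeg hdisc ι
  constructor
  · ext z
    simp only [Set.mem_setOf_eq]
    constructor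
    · rintro ⟨M, h00, h10, hz⟩
      obtain ⟨A, B, hAB⟩ := hcop
      set γ := M.1 0 1 with hγdef
      set δ := M.1 1 1 with hδdef
      have hdetM : α * δ - γ * β = 1 := by
        have h := M.2
        rw [Matrix.det_fin_two] at h
        rw [hγdef, hδdef, ← h00, ← h10]
        linear_combination h
      set m : RingOfIntegers K := A * (γ - γ₀) + B * (δ - δ₀) with hm
      have hδ : δ = δ₀ + β * m := by
        rw [hm]
        linear_combination (δ₀ - δ) * hAB + A * hdetM - A * hdet
      obtain ⟨k, hk⟩ := hωall m
      refine ⟨k, ?_⟩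
      rw [hz]
      have hcurv : curvM K ι M = curv (emb K ι β) (emb K ι δ) := by
        rw [curvM, h10]
      rw [hcurv, hδ]
      have hemb : emb K ι (δ₀ + β * m) = emb K ι δ₀ + emb K ι β * emb K ι m := by
        simp [emb_hom, _root_.map_add, _root_.map_mul]
      rw [hemb, curv_expand, hk]
      push_cast
      ring
    · rintro ⟨k, rfl⟩
      set m : RingOfIntegers K := k • ω with hm
      refine ⟨⟨!![α, γ₀ + α * m; β, δ₀ + β * m], ?_⟩, ?_, ?_, ?_⟩
      · rw [Matrix.det_fin_two_of]
        linear_combination hdet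
      · simp
      · simp
      · have h10 : (!![α, γ₀ + α * m; β, δ₀ + β * m] : Matrix (Fin 2) (Fin 2) _) 1 0 = β := by
          simp
        have h11 : (!![α, γ₀ + α * m; β, δ₀ + β * m] : Matrix (Fin 2) (Fin 2) _) 1 1
            = δ₀ + β * m := by simp
        unfold curvM
        simp only [h10, h11]
        have hemb : emb K ι (δ₀ + β * m) = emb K ι δ₀ + emb K ι β * emb K ι m := by
          simp [emb_hom, _root_.map_add, _root_.map_mul]
        rw [hemb, curv_expand]
        have hkm : 2 * (emb K ι m).im = (k : ℝ) * Real.sqrt (-(NumberField.discr K : ℝ)) := by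
          have : emb K ι m = (k : ℂ) * emb K ι ω := by
            rw [hm, emb_hom, map_zsmul, zsmul_eq_mul]
          rw [this]
          simp [Complex.mul_im]
          linear_combination (k : ℝ) * hω
        rw [hkm]
        push_cast
        ring
  · intro hβ
    have hβC : emb K ι β ≠ 0 := by
      intro h
      apply hβ
      have h2 : algebraMap (RingOfIntegers K) K β = 0 := by
        apply ι.injective
        rw [_root_.map_zero]
        exact h
      exact (map_eq_zero_iff _ NumberField.RingOfIntegers.coe_injective).mp h2
    refine ⟨emb K ι α / emb K ι β, Complex.I * conj (emb K ι β) / emb K ι β, ?_,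
      ⟨0, by simp⟩, ?_⟩
    · apply div_ne_zero _ hβC
      exact mul_ne_zero Complex.I_ne_zero ((map_ne_zero _).mpr hβC)
    · intro M h00 h10 hb
      set eα := emb K ι α with heα
      set eβ := emb K ι β with heβ
      set eγ := emb K ι (M.1 0 1) with heγ
      set eδ := emb K ι (M.1 1 1) with heδ
      have hdetC : eα * eδ - eγ * eβ = 1 := by
        have h := M.2
        rw [Matrix.det_fin_two, h00, h10] at h
        have h2 := congrArg (emb K ι) h
        rw [heα, heδ, heγ, heβ]
        simpa [emb_hom, _root_.map_sub, _root_.map_mul, _root_.map_one] using h2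
      set bC := curvM K ι M with hbC
      have hbM : bC = curv eβ eδ := by rw [hbC, curvM, h10]
      have hbreal : (starRingEnd ℂ) bC = bC := by
        rw [hbM]
        simp only [curv, _root_.map_mul, _root_.map_sub, Complex.conj_I, Complex.conj_conj]
        ring
      have hbre : bC = ((bC.re : ℝ) : ℂ) := (Complex.conj_eq_iff_re.mp hbreal).symm
      refine ⟨(bC.re)⁻¹, ?_⟩
      have ht : (((bC.re)⁻¹ : ℝ) : ℂ) = bC⁻¹ := by
        rw [Complex.ofReal_inv, ← hbre]
      rw [ht]
      have key2 : curvCenterM K ι M * eβ - bC * eα = Complex.I * conj eβ := by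
        rw [hbM]
        simp only [curvCenterM, curv, curvCenter, h00, h10]
        linear_combination (Complex.I * conj eβ) * hdetC
      field_simp
      linear_combination key2
end

section
/- Let M = [[α,γ],[β,δ]] ∈ SL₂(O_K) with β ≠ 0, and let M′ = M·[[1, τ],[0, −1]] (so M′ = [[α, ατ−γ],[β, βτ−δ]], of determinant −1). Then the circles M(ℝ̂) and M′(ℝ̂) intersect in exactly the single point α/β (they are tangent at α/β), and the sum of their curvatures satisfies b(M) + b(M′) = √(−Δ)·N(β). -/
open Complex ComplexConjugate NumberField OnePoint

/-- The complex number `τ` attached to a discriminant `Δ < 0`: with `√Δ := i·√(−Δ)`,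
`τ = √Δ/2` if `Δ ≡ 0 (mod 4)` and `τ = (1+√Δ)/2` otherwise (i.e. if `Δ ≡ 1 (mod 4)`),
so that `(1, τ)` is a `ℤ`-basis of `O_K`. -/
noncomputable def tauC (Δ : ℤ) : ℂ :=
  if Δ % 4 = 0 then Complex.I * (Real.sqrt (-(Δ : ℝ)) : ℂ) / 2
  else (1 + Complex.I * (Real.sqrt (-(Δ : ℝ)) : ℂ)) / 2

/-- For `M = [[α,γ],[β,δ]] ∈ SL₂(O_K)` with `β ≠ 0`, and
`M′ = M·[[1,τ],[0,−1]] = [[α, ατ−γ],[β, βτ−δ]]`, the circles `M(ℝ̂)` and `M′(ℝ̂)`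
intersect in exactly the single point `α/β`, and `b(M) + b(M′) = √(−Δ)·N(β)`. -/
theorem stmt7 (K : Type) [Field K] [NumberField K]
    (hdeg : Module.finrank ℚ K = 2) (hdisc : NumberField.discr K < 0)
    (ι : K →+* ℂ)
    (M : Matrix.SpecialLinearGroup (Fin 2) (RingOfIntegers K))
    (α β γ δ τ : ℂ)
    (hα : α = emb K ι (M.1 0 0)) (hγ : γ = emb K ι (M.1 0 1))
    (hβ : β = emb K ι (M.1 1 0)) (hδ : δ = emb K ι (M.1 1 1))
    (hβ0 : β ≠ 0) (hτ : τ = tauC (NumberField.discr K)) :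
    mobius α β γ δ ∩ mobius α β (α * τ - γ) (β * τ - δ)
        = {((α / β : ℂ) : OnePoint ℂ)}
      ∧ curv β δ + curv β (β * τ - δ)
        = (Real.sqrt (-(NumberField.discr K : ℝ)) : ℂ) * (β * conj β) := by
  set s : ℝ := Real.sqrt (-(NumberField.discr K : ℝ)) with hs_def
  have hs : 0 < s := by
    apply Real.sqrt_pos.2
    have h : (NumberField.discr K : ℝ) < 0 := by exact_mod_cast hdisc
    linarith
  have hτim : τ.im = s / 2 := by
    rw [hτ]; unfold tauC
    split <;> simp [Complex.div_im, Complex.add_im, Complex.mul_im, hs_def]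
  -- τ is not real
  have hτnr : ∀ t : ℝ, τ ≠ (t : ℂ) := by
    intro t h
    have := congrArg Complex.im h
    rw [hτim, Complex.ofReal_im] at this
    linarith
  have hτsub : τ - (starRingEnd ℂ) τ = (s : ℂ) * Complex.I := by
    rw [Complex.sub_conj, hτim]; push_cast; ring
  -- determinant
  have hdet : α * δ - γ * β = 1 := by
    have h2 : M.1 0 0 * M.1 1 1 - M.1 0 1 * M.1 1 0 = 1 := by
      rw [← Matrix.det_fin_two]; exact M.2
    have h3 := congrArg (fun x : RingOfIntegers K => ι (algebraMap (RingOfIntegers K) K x)) h2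
    simp only [map_sub, map_mul, map_one] at h3
    rw [hα, hβ, hγ, hδ]; unfold emb
    linear_combination h3
  constructor
  · ext w
    simp only [Set.mem_inter_iff, Set.mem_singleton_iff]
    constructor
    · rintro ⟨h1, h2⟩
      rcases h1 with ⟨z1, hz1, rfl⟩ | ⟨hr1, rfl⟩
      · rcases h2 with ⟨z2, hz2, hz12⟩ | ⟨hr2, hinf⟩
        · -- both finite
          have hz12' : z1 = z2 := by exact_mod_cast hz12
          rcases hz1 with ⟨x, hx0, hx⟩ | ⟨-, hx⟩
          · rcases hz2 with ⟨y, hy0, hy⟩ | ⟨-, hy⟩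
            · exfalso
              have heq : (α * (x : ℂ) + γ) * (β * (y : ℂ) + (β * τ - δ))
                  = (α * (y : ℂ) + (α * τ - γ)) * (β * (x : ℂ) + δ) := by
                have := hx.symm.trans (hz12'.trans hy)
                rw [div_eq_div_iff hx0 hy0] at this
                linear_combination this
              have : τ = ((-(x + y) : ℝ) : ℂ) := by
                push_cast
                linear_combination (-1 : ℂ) * heq - ((x : ℂ) + (y : ℂ) + τ) * hdet
              exact hτnr _ this
            · rw [hz12', hy]
          · rw [hx]
        · exact absurd hinf.symm (OnePoint.infty_ne_coe z1)
      · rcases h2 with ⟨z2, hz2, hinf⟩ | ⟨hr2, -⟩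
        · exact absurd hinf (OnePoint.infty_ne_coe z2)
        · exfalso
          rcases hr1 with h | ⟨x, hx⟩
          · exact hβ0 h
          rcases hr2 with h | ⟨y, hy⟩
          · exact hβ0 h
          have : τ = ((x + y : ℝ) : ℂ) := by
            have : β * τ = β * ((x : ℂ) + y) := by
              push_cast at hy ⊢
              linear_combination hy + hx
            push_cast
            exact mul_left_cancel₀ hβ0 this
          exact hτnr _ this
    · rintro rfl
      exact ⟨Or.inl ⟨α / β, Or.inr ⟨hβ0, rfl⟩, rfl⟩,
             Or.inl ⟨α / β, Or.inr ⟨hβ0, rfl⟩, rfl⟩⟩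
  · simp only [curv, map_sub, map_mul]
    linear_combination (-Complex.I * β * (starRingEnd ℂ) β) * hτsub
      - ((s : ℂ) * β * (starRingEnd ℂ) β) * Complex.I_sq
end

section
/- Let M = [[α,γ],[β,δ]] ∈ SL₂(O_K). Then the set of curvatures of the circles immediately tangent to M(ℝ̂), namely { b( M·N·[[1,τ],[0,−1]] ) : N ∈ SL₂(ℤ) }, equals the set of values { √(−Δ)·N(mβ + nδ) − b(M) : m, n ∈ ℤ with gcd(m,n) = 1 } of the translated norm form at primitive vectors of the lattice ℤβ + ℤδ. -/
open Complex ComplexConjugate NumberField OnePoint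

lemma keyCurv (β δ τ : ℂ) (r : ℝ) (hr : τ - (starRingEnd ℂ) τ = Complex.I * (r : ℂ))
    (m n p q : ℤ) (hdet : (m : ℂ) * q - p * n = 1) :
    curv ((m : ℂ) * β + (n : ℂ) * δ)
        (((m : ℂ) * β + (n : ℂ) * δ) * τ + ((p : ℂ) * β + (q : ℂ) * δ) * (-1))
      = (r : ℂ) * (((m : ℂ) * β + (n : ℂ) * δ) * (starRingEnd ℂ) ((m : ℂ) * β + (n : ℂ) * δ))
        - curv β δ := by
  have hc : (starRingEnd ℂ) τ = τ - Complex.I * (r : ℂ) := by linear_combination -hr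
  simp only [curv, map_add, map_sub, map_mul, map_neg, map_one, map_intCast, hc]
  linear_combination (-Complex.I * (β * (starRingEnd ℂ) δ - (starRingEnd ℂ) β * δ)) * hdet
    + (-(r : ℂ) * ((m : ℂ) * β + (n : ℂ) * δ) * ((m : ℂ) * (starRingEnd ℂ) β + (n : ℂ) * (starRingEnd ℂ) δ)) * Complex.I_sq

/-- For `M = [[α,γ],[β,δ]] ∈ SL₂(O_K)`, the set of curvatures
`b(M·N·[[1,τ],[0,−1]])` of the circles immediately tangent to `M(ℝ̂)`, as `N` ranges over
`SL₂(ℤ)`, equals the set of values `√(−Δ)·N(mβ+nδ) − b(M)` of the translated norm form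
at primitive vectors `mβ+nδ` (`gcd(m,n) = 1`) of the lattice `ℤβ + ℤδ`. -/
theorem stmt8 (K : Type) [Field K] [NumberField K]
    (hdeg : Module.finrank ℚ K = 2) (hdisc : NumberField.discr K < 0)
    (ι : K →+* ℂ)
    (M : Matrix.SpecialLinearGroup (Fin 2) (RingOfIntegers K))
    (β δ τ : ℂ)
    (hβ : β = emb K ι (M.1 1 0)) (hδ : δ = emb K ι (M.1 1 1))
    (hτ : τ = tauC (NumberField.discr K)) :
    {z : ℂ | ∃ N : Matrix.SpecialLinearGroup (Fin 2) ℤ,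
        z = curv ((M.1.map (emb K ι) * N.1.map (fun n : ℤ => (n : ℂ))
                    * !![1, τ; 0, -1]) 1 0)
                 ((M.1.map (emb K ι) * N.1.map (fun n : ℤ => (n : ℂ))
                    * !![1, τ; 0, -1]) 1 1)}
      = {z : ℂ | ∃ m n : ℤ, Int.gcd m n = 1 ∧
          z = (Real.sqrt (-(NumberField.discr K : ℝ)) : ℂ)
                * (((m : ℂ) * β + (n : ℂ) * δ) * conj ((m : ℂ) * β + (n : ℂ) * δ))
              - curv β δ} := by
  have hr : τ - (starRingEnd ℂ) τ
      = Complex.I * ((Real.sqrt (-(NumberField.discr K : ℝ)) : ℝ) : ℂ) := by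
    rw [hτ]; unfold tauC
    split_ifs <;>
      simp [map_div₀, map_add, map_mul, map_one, Complex.conj_I, Complex.conj_ofReal, map_ofNat] <;> ring
  ext z
  simp only [Set.mem_setOf_eq]
  constructor
  · rintro ⟨N, rfl⟩
    refine ⟨N.1 0 0, N.1 1 0, ?_, ?_⟩
    · have hdet := N.2
      rw [Matrix.det_fin_two] at hdet
      exact Int.isCoprime_iff_gcd_eq_one.mp ⟨N.1 1 1, -(N.1 0 1), by linarith⟩
    · have hdet := N.2
      rw [Matrix.det_fin_two] at hdet
      have hdetC : ((N.1 0 0 : ℤ) : ℂ) * (N.1 1 1) - (N.1 0 1) * (N.1 1 0) = 1 := by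
        exact_mod_cast congrArg (fun x : ℤ => (x : ℂ)) hdet
      have e0 : (M.1.map (emb K ι) * N.1.map (fun n : ℤ => (n : ℂ)) * !![1, τ; 0, -1]) 1 0
          = ((N.1 0 0 : ℤ) : ℂ) * β + ((N.1 1 0 : ℤ) : ℂ) * δ := by
        simp [Matrix.mul_apply, Fin.sum_univ_two, Matrix.map_apply, hβ, hδ]
        ring
      have e1 : (M.1.map (emb K ι) * N.1.map (fun n : ℤ => (n : ℂ)) * !![1, τ; 0, -1]) 1 1
          = (((N.1 0 0 : ℤ) : ℂ) * β + ((N.1 1 0 : ℤ) : ℂ) * δ) * τ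
            + (((N.1 0 1 : ℤ) : ℂ) * β + ((N.1 1 1 : ℤ) : ℂ) * δ) * (-1) := by
        simp [Matrix.mul_apply, Fin.sum_univ_two, Matrix.map_apply, hβ, hδ]
        ring
      rw [e0, e1, keyCurv β δ τ _ hr _ _ _ _ hdetC]
  · rintro ⟨m, n, hmn, rfl⟩
    obtain ⟨u, v, huv⟩ := Int.isCoprime_iff_gcd_eq_one.mpr hmn
    refine ⟨⟨!![m, -v; n, u], by simp [Matrix.det_fin_two]; linarith⟩, ?_⟩
    have hdetC : ((m : ℤ) : ℂ) * u - (-v : ℤ) * n = 1 := by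
      have : m * u - (-v) * n = 1 := by linarith
      exact_mod_cast congrArg (fun x : ℤ => (x : ℂ)) this
    have e0 : (M.1.map (emb K ι) * (!![m, -v; n, u] : Matrix (Fin 2) (Fin 2) ℤ).map
          (fun n : ℤ => (n : ℂ)) * !![1, τ; 0, -1]) 1 0
        = (m : ℂ) * β + (n : ℂ) * δ := by
      simp [Matrix.mul_apply, Fin.sum_univ_two, Matrix.map_apply, hβ, hδ]
      ring
    have e1 : (M.1.map (emb K ι) * (!![m, -v; n, u] : Matrix (Fin 2) (Fin 2) ℤ).map
          (fun n : ℤ => (n : ℂ)) * !![1, τ; 0, -1]) 1 1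
        = ((m : ℂ) * β + (n : ℂ) * δ) * τ
          + (((-v : ℤ) : ℂ) * β + ((u : ℤ) : ℂ) * δ) * (-1) := by
      simp [Matrix.mul_apply, Fin.sum_univ_two, Matrix.map_apply, hβ, hδ]
      ring
    rw [e0, e1, keyCurv β δ τ _ hr _ _ _ _ hdetC]
end

section
/- Let Λ ⊆ O_K be an additive subgroup of finite index, and let Ord(Λ) := {α ∈ O_K : αΛ ⊆ Λ} be its multiplier order. Then the following are equivalent: (i) Λ admits a ℤ-basis β, δ consisting of coprime elements, i.e. Λ = ℤβ + ℤδ with βO_K + δO_K = O_K; (ii) the index [O_K : Λ] equals the index [O_K : Ord(Λ)] (the conductor of the order Ord(Λ)). -/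
open Complex ComplexConjugate NumberField

/-- Arithmetic core, forward direction. -/
lemma key1 (a c v N : ℤ) (hg : IsCoprime a N) (ha : a ≠ 0)
    (h1 : c ∣ v * a) (h2 : a * c ∣ v * N) : a * c ∣ v := by
  have hav : a ∣ v := by
    have : a ∣ v * N := dvd_trans (dvd_mul_right a c) h2
    exact hg.dvd_of_dvd_mul_right this
  obtain ⟨v', rfl⟩ := hav
  have h2' : c ∣ v' * N := by
    rcases h2 with ⟨k, hk⟩
    refine ⟨k, ?_⟩
    apply mul_left_cancel₀ ha
    linarith [hk]
  have h1' : c ∣ v' * (a * a) := by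
    rcases h1 with ⟨k, hk⟩
    exact ⟨k, by linarith [hk]⟩
  have hg2 : IsCoprime (a * a) N := (hg.mul_left hg)
  obtain ⟨α, β, hαβ⟩ := hg2
  have : c ∣ v' := by
    have : v' = β * (v' * N) + α * (v' * (a * a)) := by linear_combination v' * hαβ.symm
    rw [this]
    exact dvd_add (Dvd.dvd.mul_left h2' β) (Dvd.dvd.mul_left h1' α)
  exact mul_dvd_mul_left a this

/-- Arithmetic core, converse direction. -/
lemma key2 (a c b s t : ℤ) (ha : a ≠ 0) (hc : c ≠ 0)
    (h : ∀ v : ℤ, (∃ m n : ℤ, m * a + n * b = 0 ∧ n * c = v * a) →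
      (∃ m n : ℤ, m * a + n * b = v * (c * s) ∧ n * c = v * (b + c * t)) →
      a * c ∣ v) :
    IsCoprime a (b * b + b * c * t - c * c * s) := by
  set N := b * b + b * c * t - c * c * s with hN
  rw [Int.isCoprime_iff_gcd_eq_one]
  by_contra hne
  obtain ⟨p, hp, hpg⟩ := Nat.exists_prime_and_dvd hne
  have hpa : (p : ℤ) ∣ a := dvd_trans (Int.natCast_dvd_natCast.mpr hpg) (Int.gcd_dvd_left _ _)
  have hpN : (p : ℤ) ∣ N := dvd_trans (Int.natCast_dvd_natCast.mpr hpg) (Int.gcd_dvd_right _ _)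
  obtain ⟨a₂, ha₂⟩ := hpa
  obtain ⟨N₂, hN₂⟩ := hpN
  have ha₂0 : a₂ ≠ 0 := by rintro rfl; simp at ha₂; exact ha ha₂
  have hdvd : a * c ∣ a₂ * c := by
    refine h (a₂ * c) ⟨-(a₂ * b), a₂ * a, by ring, by ring⟩ ⟨-N₂, a₂ * (b + c * t), ?_, by ring⟩
    linear_combination (-N₂) * ha₂ - a₂ * hN + a₂ * hN₂
  -- size contradiction: |a*c| = p * |a₂ * c| > |a₂ * c| > 0
  have h1 : (a₂ * c).natAbs ≠ 0 := by
    simp [Int.natAbs_ne_zero, ha₂0, hc]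
  have h2 : (a * c).natAbs ∣ (a₂ * c).natAbs := Int.natAbs_dvd_natAbs.mpr hdvd
  have h3 := Nat.le_of_dvd (Nat.pos_of_ne_zero h1) h2
  have h4 : (a * c).natAbs = p * (a₂ * c).natAbs := by
    rw [ha₂]
    rw [show (p : ℤ) * a₂ * c = (p:ℤ) * (a₂ * c) by ring, Int.natAbs_mul, Int.natAbs_natCast]
  have := hp.two_le
  nlinarith [Nat.pos_of_ne_zero h1]

/-- Index of the subgroup `ℤ(a·e1) + ℤξ` where `(e1, e2)` is a `ℤ`-basis and `ξ` has
second coordinate `c`. -/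
lemma index_normal {R : Type*} [AddCommGroup R] (e1 e2 : R) (c1 c2 : R →+ ℤ)
    (hrep : ∀ x : R, x = c1 x • e1 + c2 x • e2)
    (h1e1 : c1 e1 = 1) (h2e1 : c2 e1 = 0) (h2e2 : c2 e2 = 1)
    (a c : ℤ) (ha : a ≠ 0) (hc : c ≠ 0) (ξ : R) (hξ : c2 ξ = c)
    (H : AddSubgroup R) (hmem : ∀ x, x ∈ H ↔ ∃ m n : ℤ, x = m • (a • e1) + n • ξ) :
    H.index = a.natAbs * c.natAbs := by
  classical
  set b' : ℤ := c1 ξ with hb'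
  -- the intermediate subgroup
  set Kg : AddSubgroup R := AddSubgroup.comap c2 (AddSubgroup.zmultiples c) with hKg
  have hmemK : ∀ x : R, x ∈ Kg ↔ c ∣ c2 x := by
    intro x
    simp [hKg, AddSubgroup.mem_comap, Int.mem_zmultiples_iff]
  have hHK : H ≤ Kg := by
    intro x hx
    obtain ⟨m, n, rfl⟩ := (hmem x).1 hx
    rw [hmemK]
    simp only [map_add, map_zsmul, h2e1, hξ, smul_eq_mul, mul_zero, zero_add]
    exact Dvd.dvd.mul_left dvd_rfl n
  have hKind : Kg.index = c.natAbs := by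
    have hsurj : Function.Surjective c2 := by
      intro n; exact ⟨n • e2, by simp [map_zsmul, h2e2]⟩
    rw [hKg, AddSubgroup.index_comap_of_surjective _ hsurj, Int.index_zmultiples]
  -- coordinate equality implies equality
  have hext : ∀ x y : R, c1 x = c1 y → c2 x = c2 y → x = y := by
    intro x y hx hy
    rw [hrep x, hrep y, hx, hy]
  -- membership in H by coordinates
  have hcoord : ∀ x : R, x ∈ H ↔ ∃ m n : ℤ, c1 x = m * a + n * b' ∧ c2 x = n * c := by
    intro x
    rw [hmem]
    constructor
    · rintro ⟨m, n, rfl⟩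
      refine ⟨m, n, ?_, ?_⟩
      · simp only [map_add, map_zsmul, h1e1, smul_eq_mul, ← hb', mul_one]
      · simp only [map_add, map_zsmul, h2e1, hξ, smul_eq_mul, mul_zero, zero_add]
    · rintro ⟨m, n, h1, h2⟩
      refine ⟨m, n, hext _ _ ?_ ?_⟩
      · simp [map_add, map_zsmul, h1e1, h2e1, smul_eq_mul, h1, ← hb']
      · simp [map_add, map_zsmul, h2e1, hξ, smul_eq_mul, h2]
  -- hom to ZMod a.natAbs on Kg
  have hdvdK : ∀ x : Kg, c ∣ c2 (x : R) := fun x => (hmemK x).1 x.2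
  let φ : Kg →+ ℤ := AddMonoidHom.mk' (fun x => c1 (x : R) - (c2 (x : R) / c) * b') (by
    rintro x y
    have hx := hdvdK x
    have hy := hdvdK y
    push_cast [map_add]
    rw [Int.add_ediv_of_dvd_left hx]
    ring)
  let ψ : Kg →+ ZMod a.natAbs := (Int.castAddHom (ZMod a.natAbs)).comp φ
  have hsurjψ : Function.Surjective ψ := by
    intro z
    obtain ⟨n, rfl⟩ := ZMod.intCast_surjective z
    refine ⟨⟨n • e1, by rw [hmemK]; simp [map_zsmul, h2e1]⟩, ?_⟩
    simp [ψ, φ, AddMonoidHom.mk'_apply, map_zsmul, h1e1, h2e1, smul_eq_mul]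
  have hker : ψ.ker = H.addSubgroupOf Kg := by
    ext x
    have hdvd := hdvdK x
    obtain ⟨n, hn⟩ := hdvd
    have hnc : c2 (x : R) / c = n := by rw [hn]; exact Int.mul_ediv_cancel_left n hc
    simp only [AddMonoidHom.mem_ker, ψ, φ, AddMonoidHom.comp_apply, AddMonoidHom.mk'_apply,
      Int.coe_castAddHom, ZMod.intCast_zmod_eq_zero_iff_dvd, Int.natAbs_dvd,
      AddSubgroup.mem_addSubgroupOf]
    rw [hcoord]
    constructor
    · rintro ⟨k, hk⟩
      exact ⟨k, n, by rw [hnc] at hk; linarith [hk], by rw [hn]; ring⟩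
    · rintro ⟨m, k, h1, h2⟩
      have : n = k := by
        have hck : c * n = c * k := by rw [← hn, h2]; ring
        exact mul_left_cancel₀ hc hck
      subst this
      exact ⟨m, by rw [hnc, h1]; ring⟩
  have hrel : H.relIndex Kg = a.natAbs := by
    rw [AddSubgroup.relIndex, ← hker, AddSubgroup.index_ker]
    have hrange : ψ.range = ⊤ := AddMonoidHom.range_eq_top.2 hsurjψ
    have h2 : Nat.card (⊤ : AddSubgroup (ZMod a.natAbs)) = Nat.card (ZMod a.natAbs) :=
      Nat.card_congr AddSubgroup.topEquiv.toEquiv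
    rw [hrange, h2, Nat.card_zmod]
  rw [← AddSubgroup.relIndex_mul_index hHK, hrel, hKind]

lemma exists_omega (K : Type) [Field K] [NumberField K] (hdeg : Module.finrank ℚ K = 2) :
    ∃ (ω : 𝓞 K) (c1 c2 : 𝓞 K →+ ℤ),
      (∀ x : 𝓞 K, x = c1 x • (1 : 𝓞 K) + c2 x • ω) ∧
      c1 1 = 1 ∧ c2 1 = 0 ∧ c1 ω = 0 ∧ c2 ω = 1 := by
  classical
  have hrank : Module.finrank ℤ (𝓞 K) = 2 := by rw [RingOfIntegers.rank]; exact hdeg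
  let b₀ : Module.Basis (Fin 2) ℤ (𝓞 K) := (Module.finBasis ℤ (𝓞 K)).reindex (finCongr hrank)
  set p : ℤ := b₀.repr 1 0 with hp
  set q : ℤ := b₀.repr 1 1 with hq
  have h1rep : (1 : 𝓞 K) = p • b₀ 0 + q • b₀ 1 := by
    conv_lhs => rw [← b₀.sum_repr 1]
    rw [Fin.sum_univ_two]
  have hg : IsCoprime p q := by
    rw [Int.isCoprime_iff_gcd_eq_one]
    set g : ℕ := Int.gcd p q with hgdef
    obtain ⟨p', hp'⟩ : (g:ℤ) ∣ p := Int.gcd_dvd_left _ _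
    obtain ⟨q', hq'⟩ : (g:ℤ) ∣ q := Int.gcd_dvd_right _ _
    have h1 : (1 : 𝓞 K) = (g:ℤ) • (p' • b₀ 0 + q' • b₀ 1) := by
      rw [h1rep, hp', hq', smul_add, smul_smul, smul_smul]
    have h2 : b₀ 0 = (g:ℤ) • (b₀ 0 * (p' • b₀ 0 + q' • b₀ 1)) := by
      conv_lhs => rw [← mul_one (b₀ 0), h1]
      rw [mul_smul_comm]
    have h3 := congrArg (fun z => b₀.repr z 0) h2
    simp only [map_zsmul, Module.Basis.repr_self, Finsupp.single_eq_same, smul_eq_mul,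
      Finsupp.smul_apply] at h3
    have : g ∣ 1 := Int.ofNat_dvd_right.mp ⟨_, h3⟩
    exact Nat.dvd_one.mp this
  obtain ⟨x, y, hxy⟩ := hg
  set ω' : 𝓞 K := (-y) • b₀ 0 + x • b₀ 1 with hω'
  have hω0 : b₀.repr ω' 0 = -y := by
    rw [hω', map_add, map_zsmul, map_zsmul, Module.Basis.repr_self, Module.Basis.repr_self]
    simp [Finsupp.single_apply]
  have hω1 : b₀.repr ω' 1 = x := by
    rw [hω', map_add, map_zsmul, map_zsmul, Module.Basis.repr_self, Module.Basis.repr_self]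
    simp [Finsupp.single_apply]
  refine ⟨ω',
    AddMonoidHom.mk' (fun r => x * b₀.repr r 0 + y * b₀.repr r 1)
      (by intro u v; simp only [map_add, Finsupp.add_apply]; ring),
    AddMonoidHom.mk' (fun r => p * b₀.repr r 1 - q * b₀.repr r 0)
      (by intro u v; simp only [map_add, Finsupp.add_apply]; ring),
    ?_, ?_, ?_, ?_, ?_⟩
  · intro r
    refine b₀.ext_elem (fun i => ?_)
    have e0 : b₀.repr ((x * b₀.repr r 0 + y * b₀.repr r 1) • (1 : 𝓞 K)
        + (p * b₀.repr r 1 - q * b₀.repr r 0) • ω') 0 = b₀.repr r 0 := by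
      rw [map_add, map_zsmul, map_zsmul]
      simp only [Finsupp.add_apply, Finsupp.smul_apply, smul_eq_mul, hω0, ← hp]
      linear_combination (b₀.repr r 0) * hxy
    have e1 : b₀.repr ((x * b₀.repr r 0 + y * b₀.repr r 1) • (1 : 𝓞 K)
        + (p * b₀.repr r 1 - q * b₀.repr r 0) • ω') 1 = b₀.repr r 1 := by
      rw [map_add, map_zsmul, map_zsmul]
      simp only [Finsupp.add_apply, Finsupp.smul_apply, smul_eq_mul, hω1, ← hq]
      linear_combination (b₀.repr r 1) * hxy
    fin_cases i
    · exact e0.symm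
    · exact e1.symm
  · simp only [AddMonoidHom.mk'_apply, ← hp, ← hq]; linear_combination hxy
  · simp only [AddMonoidHom.mk'_apply, ← hp, ← hq]; ring
  · simp only [AddMonoidHom.mk'_apply, hω0, hω1]; ring
  · simp only [AddMonoidHom.mk'_apply, hω0, hω1]; linear_combination hxy

lemma index_smul_mem {G : Type*} [AddCommGroup G] (H : AddSubgroup G) (g : G) :
    H.index • g ∈ H :=
  @Subgroup.pow_index_mem (Multiplicative G) _ (AddSubgroup.toSubgroup H)
    inferInstance (Multiplicative.ofAdd g)

lemma normal_form {R : Type*} [CommRing R] (e2 : R) (c1 c2 : R →+ ℤ)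
    (hrep : ∀ x : R, x = c1 x • (1:R) + c2 x • e2)
    (h2e1 : c2 (1:R) = 0) (h2e2 : c2 e2 = 1)
    (Λ : AddSubgroup R) (hfin : Λ.FiniteIndex) :
    ∃ (a c : ℤ) (ξ : R), 0 < a ∧ 0 < c ∧ c2 ξ = c ∧
      (∀ x : R, x ∈ Λ ↔ ∃ m n : ℤ, x = m • (a • (1:R)) + n • ξ) := by
  classical
  have hn : (Λ.index : ℤ) ≠ 0 := by exact_mod_cast hfin.index_ne_zero
  -- the subgroup of integer multiples of 1 lying in Λ
  set A : AddSubgroup ℤ := Λ.comap ((zmultiplesHom R) 1) with hA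
  have hmemA : ∀ m : ℤ, m ∈ A ↔ m • (1:R) ∈ Λ := fun m => Iff.rfl
  obtain ⟨g₁, hg₁⟩ := Int.subgroup_cyclic A
  have hdvdA : ∀ m : ℤ, m ∈ A ↔ g₁ ∣ m := by
    intro m
    rw [hg₁, ← AddSubgroup.zmultiples_eq_closure, Int.mem_zmultiples_iff]
  have hg₁0 : g₁ ≠ 0 := by
    intro h0
    have : (Λ.index : ℤ) ∈ A := by
      rw [hmemA]
      have := index_smul_mem Λ (1:R)
      simpa [natCast_zsmul] using this
    rw [hdvdA, h0] at this
    exact hn (zero_dvd_iff.mp this)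
  -- the image subgroup under c2
  set C : AddSubgroup ℤ := Λ.map c2 with hC
  obtain ⟨g₂, hg₂⟩ := Int.subgroup_cyclic C
  have hdvdC : ∀ m : ℤ, m ∈ C ↔ g₂ ∣ m := by
    intro m
    rw [hg₂, ← AddSubgroup.zmultiples_eq_closure, Int.mem_zmultiples_iff]
  have hg₂0 : g₂ ≠ 0 := by
    intro h0
    have h1 : (Λ.index : ℤ) ∈ C := by
      refine AddSubgroup.mem_map.2 ⟨Λ.index • e2, ?_, ?_⟩
      · simpa using index_smul_mem Λ e2
      · rw [map_nsmul, h2e2]; simp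
    rw [hdvdC, h0] at h1
    exact hn (zero_dvd_iff.mp h1)
  -- pick ξ with c2 ξ = |g₂|
  have hcC : (g₂.natAbs : ℤ) ∈ C := by
    rw [hdvdC]
    exact Int.dvd_natAbs.mpr dvd_rfl
  obtain ⟨ξ, hξΛ, hξ⟩ := AddSubgroup.mem_map.1 hcC
  refine ⟨(g₁.natAbs : ℤ), (g₂.natAbs : ℤ), ξ, ?_, ?_, hξ, ?_⟩
  · exact_mod_cast Nat.pos_of_ne_zero (Int.natAbs_ne_zero.mpr hg₁0)
  · exact_mod_cast Nat.pos_of_ne_zero (Int.natAbs_ne_zero.mpr hg₂0)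
  intro x
  constructor
  · intro hx
    have hc2x : g₂ ∣ c2 x := (hdvdC _).1 (AddSubgroup.mem_map.2 ⟨x, hx, rfl⟩)
    have hc2x' : (g₂.natAbs : ℤ) ∣ c2 x := Int.natAbs_dvd.mpr hc2x
    set n : ℤ := c2 x / (g₂.natAbs : ℤ) with hn'
    have hnc : n * (g₂.natAbs : ℤ) = c2 x := Int.ediv_mul_cancel hc2x'
    have hyΛ : x - n • ξ ∈ Λ := Λ.sub_mem hx (Λ.zsmul_mem hξΛ n)
    have hc2y : c2 (x - n • ξ) = 0 := by
      rw [map_sub, map_zsmul, hξ, smul_eq_mul, hnc, sub_self]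
    have hyrep : x - n • ξ = c1 (x - n • ξ) • (1:R) := by
      conv_lhs => rw [hrep (x - n • ξ)]
      rw [hc2y, zero_smul, add_zero]
    have hc1yA : c1 (x - n • ξ) ∈ A := by
      rw [hmemA, ← hyrep]
      exact hyΛ
    have ha : (g₁.natAbs : ℤ) ∣ c1 (x - n • ξ) := Int.natAbs_dvd.mpr ((hdvdA _).1 hc1yA)
    set m : ℤ := c1 (x - n • ξ) / (g₁.natAbs : ℤ) with hm'
    have hma : m * (g₁.natAbs : ℤ) = c1 (x - n • ξ) := Int.ediv_mul_cancel ha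
    refine ⟨m, n, ?_⟩
    have : m • ((g₁.natAbs : ℤ) • (1:R)) = x - n • ξ := by
      rw [smul_smul, hma, ← hyrep]
    rw [this]
    abel
  · rintro ⟨m, n, rfl⟩
    have h1 : (g₁.natAbs : ℤ) • (1:R) ∈ Λ := by
      rw [← hmemA]
      rw [hdvdA]
      exact Int.dvd_natAbs.mpr dvd_rfl
    exact Λ.add_mem (Λ.zsmul_mem h1 m) (Λ.zsmul_mem hξΛ n)

/-- The multiplier order `Ord(Λ) = {a : a·Λ ⊆ Λ}` of a lattice `Λ`, as an additive
subgroup of the ambient ring. -/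
def multOrd {R : Type*} [CommRing R] (Λ : AddSubgroup R) : AddSubgroup R where
  carrier := {a | ∀ x ∈ Λ, a * x ∈ Λ}
  add_mem' := by
    intro a b ha hb x hx
    simpa [add_mul] using Λ.add_mem (ha x hx) (hb x hx)
  zero_mem' := by
    intro x hx
    simpa using Λ.zero_mem
  neg_mem' := by
    intro a ha x hx
    simpa [neg_mul] using Λ.neg_mem (ha x hx)

/-- For a finite-index additive subgroup `Λ ⊆ O_K` of the ring of
integers of an imaginary quadratic field `K`, the following are equivalent:
(i) `Λ` admits a `ℤ`-basis of coprime elements (`Λ` is primeval);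
(ii) the index `[O_K : Λ]` equals the conductor `[O_K : Ord(Λ)]` of its multiplier order. -/
theorem stmt9 (K : Type) [Field K] [NumberField K]
    (hdeg : Module.finrank ℚ K = 2) (hdisc : NumberField.discr K < 0)
    (Λ : AddSubgroup (RingOfIntegers K)) (hfin : Λ.FiniteIndex) :
    (∃ β δ : RingOfIntegers K, IsCoprime β δ ∧
        ∀ x : RingOfIntegers K, x ∈ Λ ↔ ∃ m n : ℤ, x = m • β + n • δ)
      ↔ Λ.index = (multOrd Λ).index := by
  classical
  obtain ⟨ω, c1, c2, hrep, h11, h21, h1ω, h2ω⟩ := exists_omega K hdeg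
  obtain ⟨a, c, ξ, ha, hc, hξc, hΛ⟩ := normal_form ω c1 c2 hrep h21 h2ω Λ hfin
  set b' : ℤ := c1 ξ with hb'
  set s : ℤ := c1 (ω * ω) with hs
  set t : ℤ := c2 (ω * ω) with ht
  set N : ℤ := b' * b' + b' * c * t - c * c * s with hN
  have hω2 : ω * ω = (s : 𝓞 K) + (t : 𝓞 K) * ω := by
    conv_lhs => rw [hrep (ω * ω)]
    rw [← hs, ← ht, zsmul_eq_mul, zsmul_eq_mul, mul_one]
  have hext : ∀ x y : 𝓞 K, c1 x = c1 y → c2 x = c2 y → x = y := by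
    intro x y hx hy
    rw [hrep x, hrep y, hx, hy]
  have hξrep : ξ = (b' : 𝓞 K) + (c : 𝓞 K) * ω := by
    conv_lhs => rw [hrep ξ]
    rw [← hb', hξc, zsmul_eq_mul, zsmul_eq_mul, mul_one]
  -- coordinates of integer combinations
  have hc1lin : ∀ u v : ℤ, c1 ((u : 𝓞 K) + (v : 𝓞 K) * ω) = u := by
    intro u v
    have : (u : 𝓞 K) + (v : 𝓞 K) * ω = u • (1 : 𝓞 K) + v • ω := by
      rw [zsmul_eq_mul, zsmul_eq_mul, mul_one]
    rw [this, map_add, map_zsmul, map_zsmul, h11, h1ω]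
    simp
  have hc2lin : ∀ u v : ℤ, c2 ((u : 𝓞 K) + (v : 𝓞 K) * ω) = v := by
    intro u v
    have : (u : 𝓞 K) + (v : 𝓞 K) * ω = u • (1 : 𝓞 K) + v • ω := by
      rw [zsmul_eq_mul, zsmul_eq_mul, mul_one]
    rw [this, map_add, map_zsmul, map_zsmul, h21, h2ω]
    simp
  -- coordinate characterization of membership in Λ
  have hco : ∀ x : 𝓞 K, x ∈ Λ ↔ ∃ m n : ℤ, c1 x = m * a + n * b' ∧ c2 x = n * c := by
    intro x
    rw [hΛ x]
    constructor
    · rintro ⟨m, n, rfl⟩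
      refine ⟨m, n, ?_, ?_⟩
      · rw [map_add, map_zsmul, map_zsmul, map_zsmul, h11, ← hb']
        simp [mul_comm]
      · rw [map_add, map_zsmul, map_zsmul, map_zsmul, h21, hξc]
        simp [mul_comm]
    · rintro ⟨m, n, h1, h2⟩
      refine ⟨m, n, hext _ _ ?_ ?_⟩
      · rw [h1, map_add, map_zsmul, map_zsmul, map_zsmul, h11, ← hb']
        simp [mul_comm]
      · rw [h2, map_add, map_zsmul, map_zsmul, map_zsmul, h21, hξc]
        simp [mul_comm]
  -- the conjugate-type element
  set ξ' : 𝓞 K := ((b' + c * t : ℤ) : 𝓞 K) - (c : 𝓞 K) * ω with hξ'def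
  have hξξ' : ξ * ξ' = (N : 𝓞 K) := by
    rw [hξ'def, hξrep, hN]
    push_cast
    linear_combination (-(c : 𝓞 K)^2) * hω2
  have hc1ξ' : c1 ξ' = b' + c * t := by
    have : ξ' = ((b' + c * t : ℤ) : 𝓞 K) + ((-c : ℤ) : 𝓞 K) * ω := by
      rw [hξ'def]; push_cast; ring
    rw [this, hc1lin]
  have hc2ξ' : c2 ξ' = -c := by
    have : ξ' = ((b' + c * t : ℤ) : 𝓞 K) + ((-c : ℤ) : 𝓞 K) * ω := by
      rw [hξ'def]; push_cast; ring
    rw [this, hc2lin]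
  -- the subgroup of v with v•ω in the multiplier order
  set V : AddSubgroup ℤ := (multOrd Λ).comap ((zmultiplesHom (𝓞 K)) ω) with hVdef
  have hmemV : ∀ v : ℤ, v ∈ V ↔ v • ω ∈ multOrd Λ := fun _ => Iff.rfl
  obtain ⟨g₃, hg₃⟩ := Int.subgroup_cyclic V
  set F : ℤ := (g₃.natAbs : ℤ) with hFdef
  have hdvdV : ∀ v : ℤ, v ∈ V ↔ F ∣ v := by
    intro v
    rw [hg₃, ← AddSubgroup.zmultiples_eq_closure, Int.mem_zmultiples_iff, hFdef,
      Int.natAbs_dvd]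
  have hFnn : 0 ≤ F := by positivity
  -- characterization of v • ω ∈ multOrd Λ
  have hprod1 : ∀ v : ℤ, (v • ω) * (a • (1 : 𝓞 K)) = ((0:ℤ) : 𝓞 K) + ((v * a : ℤ) : 𝓞 K) * ω := by
    intro v
    rw [zsmul_eq_mul, zsmul_eq_mul]
    push_cast
    ring
  have hprod2 : ∀ v : ℤ, (v • ω) * ξ = ((v * (c * s) : ℤ) : 𝓞 K) + ((v * (b' + c * t) : ℤ) : 𝓞 K) * ω := by
    intro v
    rw [zsmul_eq_mul, hξrep]
    push_cast
    linear_combination ((v : 𝓞 K) * (c : 𝓞 K)) * hω2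
  have hVchar : ∀ v : ℤ, v • ω ∈ multOrd Λ ↔
      ((∃ m n : ℤ, m * a + n * b' = 0 ∧ n * c = v * a) ∧
       (∃ m n : ℤ, m * a + n * b' = v * (c * s) ∧ n * c = v * (b' + c * t))) := by
    intro v
    constructor
    · intro hv
      have haΛ : a • (1 : 𝓞 K) ∈ Λ := (hΛ _).2 ⟨1, 0, by simp⟩
      have hξΛ : ξ ∈ Λ := (hΛ _).2 ⟨0, 1, by simp⟩
      constructor
      · have h1 := hv _ haΛ
        rw [hprod1 v] at h1
        obtain ⟨m, n, hm, hn⟩ := (hco _).1 h1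
        rw [hc1lin] at hm
        rw [hc2lin] at hn
        exact ⟨m, n, hm.symm, hn.symm⟩
      · have h2 := hv _ hξΛ
        rw [hprod2 v] at h2
        obtain ⟨m, n, hm, hn⟩ := (hco _).1 h2
        rw [hc1lin] at hm
        rw [hc2lin] at hn
        exact ⟨m, n, hm.symm, hn.symm⟩
    · rintro ⟨⟨m1, n1, hm1, hn1⟩, ⟨m2, n2, hm2, hn2⟩⟩
      intro x hx
      obtain ⟨m, n, rfl⟩ := (hΛ x).1 hx
      have e1 : (v • ω) * (a • (1 : 𝓞 K)) ∈ Λ := by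
        rw [hprod1 v]
        exact (hco _).2 ⟨m1, n1, by rw [hc1lin]; exact hm1.symm, by rw [hc2lin]; exact hn1.symm⟩
      have e2 : (v • ω) * ξ ∈ Λ := by
        rw [hprod2 v]
        exact (hco _).2 ⟨m2, n2, by rw [hc1lin]; exact hm2.symm, by rw [hc2lin]; exact hn2.symm⟩
      have : (v • ω) * (m • (a • (1 : 𝓞 K)) + n • ξ)
          = m • ((v • ω) * (a • (1 : 𝓞 K))) + n • ((v • ω) * ξ) := by
        rw [mul_add, mul_smul_comm m (v • ω) (a • (1 : 𝓞 K)), mul_smul_comm n (v • ω) ξ]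
      rw [this]
      exact Λ.add_mem (Λ.zsmul_mem e1 m) (Λ.zsmul_mem e2 n)
  -- a*c belongs to V
  have hacV : (a * c) ∈ V := by
    rw [hmemV, hVchar]
    constructor
    · exact ⟨-(a * b'), a * a, by ring, by ring⟩
    · refine ⟨-N, a * (b' + c * t), ?_, by ring⟩
      rw [hN]; ring
  have hFac : F ∣ a * c := (hdvdV _).1 hacV
  have hF0 : F ≠ 0 := by
    intro h0
    rw [h0] at hFac
    have := zero_dvd_iff.mp hFac
    nlinarith
  -- normal form of the multiplier order
  have hZOrd : ∀ k : ℤ, k • (1 : 𝓞 K) ∈ multOrd Λ := by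
    intro k y hy
    have : (k • (1 : 𝓞 K)) * y = k • y := by rw [zsmul_eq_mul, zsmul_eq_mul]; ring
    rw [this]
    exact Λ.zsmul_mem hy k
  have hOrd : ∀ x : 𝓞 K, x ∈ multOrd Λ ↔
      ∃ m n : ℤ, x = m • ((1:ℤ) • (1 : 𝓞 K)) + n • (F • ω) := by
    intro x
    constructor
    · intro hx
      have hsub : (c2 x) • ω ∈ multOrd Λ := by
        have hx1 : x - (c1 x) • (1 : 𝓞 K) = (c2 x) • ω := by
          nth_rewrite 1 [hrep x]
          abel
        rw [← hx1]
        exact AddSubgroup.sub_mem _ hx (hZOrd _)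
      have hFd : F ∣ c2 x := (hdvdV _).1 ((hmemV _).2 hsub)
      refine ⟨c1 x, c2 x / F, ?_⟩
      rw [smul_smul, smul_smul, Int.ediv_mul_cancel hFd, mul_one]
      exact hrep x
    · rintro ⟨m, n, rfl⟩
      refine AddSubgroup.add_mem _ ?_ ?_
      · rw [smul_smul]
        exact hZOrd _
      · have : F • ω ∈ multOrd Λ := (hmemV _).1 ((hdvdV _).2 dvd_rfl)
        exact AddSubgroup.zsmul_mem _ this n
  -- index computations
  have hidxΛ : Λ.index = a.natAbs * c.natAbs :=
    index_normal (1 : 𝓞 K) ω c1 c2 hrep h11 h21 h2ω a c (ne_of_gt ha) (ne_of_gt hc) ξ hξc Λ hΛ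
  have hidxOrd : (multOrd Λ).index = F.natAbs := by
    have := index_normal (1 : 𝓞 K) ω c1 c2 hrep h11 h21 h2ω 1 F one_ne_zero hF0 (F • ω)
      (by rw [map_zsmul, h2ω]; simp) (multOrd Λ) hOrd
    simpa using this
  -- chain of equivalences
  have iff₁ : (∃ β δ : RingOfIntegers K, IsCoprime β δ ∧
        ∀ x : RingOfIntegers K, x ∈ Λ ↔ ∃ m n : ℤ, x = m • β + n • δ)
      ↔ ∃ u w : 𝓞 K, u * (a • (1 : 𝓞 K)) + w * ξ = 1 := by
    constructor
    · rintro ⟨β, δ, ⟨u, w, huw⟩, hchar⟩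
      have hβΛ : β ∈ Λ := (hchar β).2 ⟨1, 0, by simp⟩
      have hδΛ : δ ∈ Λ := (hchar δ).2 ⟨0, 1, by simp⟩
      obtain ⟨k₁, l₁, hβ⟩ := (hΛ β).1 hβΛ
      obtain ⟨k₂, l₂, hδ⟩ := (hΛ δ).1 hδΛ
      refine ⟨u * (k₁ : 𝓞 K) + w * (k₂ : 𝓞 K), u * (l₁ : 𝓞 K) + w * (l₂ : 𝓞 K), ?_⟩
      rw [hβ, hδ] at huw
      simp only [zsmul_eq_mul] at huw ⊢
      linear_combination huw
    · rintro ⟨u, w, huw⟩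
      exact ⟨a • (1 : 𝓞 K), ξ, ⟨u, w, huw⟩, hΛ⟩
  have iff₂ : (∃ u w : 𝓞 K, u * (a • (1 : 𝓞 K)) + w * ξ = 1) ↔ IsCoprime a N := by
    constructor
    · rintro ⟨u, w, huw⟩
      rw [Int.isCoprime_iff_gcd_eq_one]
      by_contra hne
      obtain ⟨p, hp, hpg⟩ := Nat.exists_prime_and_dvd hne
      have hpa : (p : ℤ) ∣ a := dvd_trans (Int.natCast_dvd_natCast.mpr hpg) (Int.gcd_dvd_left _ _)
      have hpN : (p : ℤ) ∣ N := dvd_trans (Int.natCast_dvd_natCast.mpr hpg) (Int.gcd_dvd_right _ _)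
      obtain ⟨a₂, ha₂⟩ := hpa
      obtain ⟨N₂, hN₂⟩ := hpN
      have huw' : u * ((a : ℤ) : 𝓞 K) + w * ξ = 1 := by
        rw [← huw, zsmul_eq_mul]; ring
      have ha₂' : ((a : ℤ) : 𝓞 K) = ((p:ℤ) : 𝓞 K) * ((a₂ : ℤ) : 𝓞 K) := by
        rw [ha₂]; push_cast; ring
      have hN₂' : ((N : ℤ) : 𝓞 K) = ((p:ℤ) : 𝓞 K) * ((N₂ : ℤ) : 𝓞 K) := by
        rw [hN₂]; push_cast; ring
      have h1 : ξ' = u * ((a : ℤ) : 𝓞 K) * ξ' + w * ((N : ℤ) : 𝓞 K) := by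
        linear_combination (-ξ') * huw' + w * hξξ'
      have hkey : ξ' = ((p:ℤ) : 𝓞 K) * (u * (a₂ : 𝓞 K) * ξ' + w * (N₂ : 𝓞 K)) := by
        linear_combination h1 + (u * ξ') * ha₂' + w * hN₂'
      -- so p divides both coordinates of ξ'
      have hcoord : c1 ξ' = (p:ℤ) * c1 (u * (a₂ : 𝓞 K) * ξ' + w * (N₂ : 𝓞 K)) ∧
          c2 ξ' = (p:ℤ) * c2 (u * (a₂ : 𝓞 K) * ξ' + w * (N₂ : 𝓞 K)) := by
        constructor
        · conv_lhs => rw [hkey, ← zsmul_eq_mul]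
          rw [map_zsmul]; simp
        · conv_lhs => rw [hkey, ← zsmul_eq_mul]
          rw [map_zsmul]; simp
      have hpc : (p:ℤ) ∣ c := by
        have := hcoord.2
        rw [hc2ξ'] at this
        exact (dvd_neg.mp ⟨_, this⟩)
      have hpb : (p:ℤ) ∣ b' := by
        have := hcoord.1
        rw [hc1ξ'] at this
        have h3 : (p:ℤ) ∣ b' + c * t := ⟨_, this⟩
        have h4 : (p:ℤ) ∣ c * t := Dvd.dvd.mul_right hpc t
        have h5 := dvd_sub h3 h4
        simpa using h5
      obtain ⟨c₂', hc₂'⟩ := hpc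
      obtain ⟨b₂', hb₂'⟩ := hpb
      -- now 1 is divisible by p
      have hone : (1 : 𝓞 K) = ((p:ℤ) : 𝓞 K) * (u * (a₂ : 𝓞 K) + w * ((b₂' : 𝓞 K) + (c₂' : 𝓞 K) * ω)) := by
        rw [← huw, hξrep, ha₂, hb₂', hc₂', zsmul_eq_mul]
        push_cast
        ring
      have h5 := congrArg c1 hone
      rw [h11] at h5
      conv_rhs at h5 => rw [← zsmul_eq_mul]
      rw [map_zsmul, smul_eq_mul] at h5
      have : (p:ℤ) ∣ 1 := ⟨_, h5⟩
      have hp1 : (p:ℕ) ∣ 1 := Int.ofNat_dvd_right.mp this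
      have hp2 : p = 1 := Nat.dvd_one.mp hp1
      have := hp.one_lt
      omega
    · intro hcop
      obtain ⟨α, β, hαβ⟩ := hcop
      refine ⟨(α : 𝓞 K), (β : 𝓞 K) * ξ', ?_⟩
      have hcast := congrArg (fun z : ℤ => (z : 𝓞 K)) hαβ
      push_cast at hcast
      rw [zsmul_eq_mul]
      calc (α : 𝓞 K) * ((a : 𝓞 K) * 1) + (β : 𝓞 K) * ξ' * ξ
          = (α : 𝓞 K) * (a : 𝓞 K) + (β : 𝓞 K) * (ξ * ξ') := by ring
        _ = (α : 𝓞 K) * (a : 𝓞 K) + (β : 𝓞 K) * (N : 𝓞 K) := by rw [hξξ']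
        _ = 1 := by linear_combination hcast
  have iff₃ : IsCoprime a N ↔ a * c = F := by
    constructor
    · intro hcop
      have hFV : F ∈ V := (hdvdV _).2 dvd_rfl
      obtain ⟨⟨m1, n1, hm1, hn1⟩, ⟨m2, n2, hm2, hn2⟩⟩ := (hVchar F).1 ((hmemV _).1 hFV)
      have hd1 : c ∣ F * a := ⟨n1, by linear_combination -hn1⟩
      have hd2 : a * c ∣ F * N := by
        refine ⟨-m2, ?_⟩
        rw [hN]
        linear_combination (-b') * hn2 + c * hm2
      have hacF : a * c ∣ F := key1 a c F N hcop (ne_of_gt ha) hd1 hd2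
      exact Int.dvd_antisymm (by positivity) hFnn hacF hFac
    · intro hacF
      have h := key2 a c b' s t (ne_of_gt ha) (ne_of_gt hc) ?_
      · rw [hN]; exact h
      · intro v hv1 hv2
        have hvV : v ∈ V := (hmemV _).2 ((hVchar v).2 ⟨hv1, hv2⟩)
        have := (hdvdV _).1 hvV
        rwa [← hacF] at this
  have iff₄ : a * c = F ↔ Λ.index = (multOrd Λ).index := by
    rw [hidxΛ, hidxOrd]
    constructor
    · intro h
      rw [← Int.natAbs_mul, h]
    · intro h
      have h2 : (a * c).natAbs = F.natAbs := by rw [Int.natAbs_mul]; exact h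
      have h3 := congrArg (fun n : ℕ => (n : ℤ)) h2
      simp only [Int.natAbs_of_nonneg (le_of_lt (mul_pos ha hc)),
        Int.natAbs_of_nonneg hFnn] at h3
      exact_mod_cast h3
  rw [iff₁, iff₂, iff₃, iff₄]
end
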